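/- arXiv:1007.1694 — 2 statements merged into one kernel-verified Lean document; each statement's English description precedes it below -/
import Mathlib

section
/- Let Γ be a consistent counter machine with m states, let (y,z) be a Skorokhod solution of the associated problem with z(0) = z^{i⁰,C⁰₁,C⁰₂}, let t ∈ ℕ, and suppose z(5t) = z^{i,C₁,C₂} where (i,C₁,C₂) = (i^t,C^t₁,C^t₂) is the configuration of the trajectory at time t. Then on the interval (5t, 5t+1): y_{A,1} and y_{B,i} are active at unit rate; for k = 1,2, y_{C,k} is active at unit rate if C_k = 0 and passive if C_k > 0; all remaining y-coordinates are passive. Moreover z(5t+1) is given by: z_A(5t+1) = (0,0,1,1,1); z_{B,j}(5t+1) = 0 for all j = 1,…,m; z_{C,k}(5t+1) = C_k − 1 + 1{C_k = 0} for k = 1,2; z_{D,k}(5t+1) = 1{C_k = 0} for k = 1,2; z_{E,(i′,b,c)}(5t+1) = 3 + Υ(i′,b,c) and z_{F,(i′,b,c)}(5t+1) = 4 + Υ(i′,b,c) for all (i′,b,c), where Υ(i′,b,c) = −b−c+(2b−1)·1{C₁=0}+(2c−1)·1{C₂=0}−1{i′=i}. -/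
open scoped BigOperators

/-- A Skorokhod solution for the matrix `R` and input path `x`:
continuous `y, z` on `[0,∞)` with `z = x + R y`, `z ≥ 0`, `y 0 = 0`,
each `y j` nondecreasing, and `y j` does not increase while `z j > 0`
(the Lebesgue–Stieltjes measure of `y j` vanishes on `{s | z s j > 0}`). -/
def IsSkorokhodSolution {n : Type*} [Fintype n] (R : Matrix n n ℝ)
    (x y z : ℝ → n → ℝ) : Prop :=
  ContinuousOn y (Set.Ici 0) ∧
  ContinuousOn z (Set.Ici 0) ∧
  (∀ t : ℝ, 0 ≤ t → z t = x t + R.mulVec (y t)) ∧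
  (∀ t : ℝ, 0 ≤ t → ∀ j, 0 ≤ z t j) ∧
  (y 0 = 0) ∧
  (∀ j, MonotoneOn (fun t => y t j) (Set.Ici 0)) ∧
  (∀ j, ∀ s₁ s₂ : ℝ, 0 ≤ s₁ → s₁ ≤ s₂ →
      (∀ s ∈ Set.Ioo s₁ s₂, 0 < z s j) → y s₂ j = y s₁ j)

/-- `R` is an S-matrix: some nonnegative `w` with `R w > 0` componentwise. -/
def IsSMatrix {n : Type*} [Fintype n] (R : Matrix n n ℝ) : Prop :=
  ∃ w : n → ℝ, (∀ i, 0 ≤ w i) ∧ (∀ i, 0 < R.mulVec w i)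

/-- `R` is completely-S: every (nonempty) principal submatrix is an S-matrix. -/
def IsCompletelyS {n : Type*} [Fintype n] [DecidableEq n] (R : Matrix n n ℝ) : Prop :=
  ∀ I : Finset n, I.Nonempty →
    IsSMatrix (R.submatrix (fun a : I => (a : n)) (fun a : I => (a : n)))

/-- Stability of the fluid model `(z₀, θ, R)`: every Skorokhod solution for
`x t = z₀ + θ t` satisfies `z t → 0` as `t → ∞`. -/
def FluidStable {n : Type*} [Fintype n] (z0 θv : n → ℝ) (R : Matrix n n ℝ) : Prop :=
  ∀ y z : ℝ → n → ℝ,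
    IsSkorokhodSolution R (fun t i => z0 i + θv i * t) y z →
    Filter.Tendsto z Filter.atTop (nhds 0)

/-- `f` is active at rate `r` on `(s₁, s₂)`. -/
def ActiveAtRate (f : ℝ → ℝ) (r s₁ s₂ : ℝ) : Prop :=
  ∀ s ∈ Set.Ioo s₁ s₂, f s - f s₁ = r * (s - s₁)

/-- `f` is active at unit rate on `(s₁, s₂)`. -/
def UnitActive (f : ℝ → ℝ) (s₁ s₂ : ℝ) : Prop := ActiveAtRate f 1 s₁ s₂

/-- `f` is passive (constant) on `(s₁, s₂)`. -/
def Passive (f : ℝ → ℝ) (s₁ s₂ : ℝ) : Prop := ∀ s ∈ Set.Ioo s₁ s₂, f s = f s₁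

/-- A counter machine with `m` states: update map with moves in
`{(-1,0),(0,-1),(0,0),(1,0),(0,1)}`, never decrementing a zero counter. -/
structure CounterMachine (m : ℕ) where
  Γ : Fin m → Bool → Bool → Fin m × ℤ × ℤ
  moves : ∀ i b c, ((Γ i b c).2.1, (Γ i b c).2.2) ∈
      ({(-1,0), (0,-1), (0,0), (1,0), (0,1)} : Set (ℤ × ℤ))
  consistent : ∀ i b c, (b = false → 0 ≤ (Γ i b c).2.1) ∧ (c = false → 0 ≤ (Γ i b c).2.2)

/-- One step of the counter machine on a configuration. -/
def CounterMachine.step {m : ℕ} (M : CounterMachine m) :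
    Fin m × ℕ × ℕ → Fin m × ℕ × ℕ := fun cfg =>
  let r := M.Γ cfg.1 (decide (0 < cfg.2.1)) (decide (0 < cfg.2.2))
  (r.1, ((cfg.2.1 : ℤ) + r.2.1).toNat, ((cfg.2.2 : ℤ) + r.2.2).toNat)

/-- Index set of the associated Skorokhod problem: groups A (5), B (m), C (2),
D (2), E (4m), F (4m); total dimension 5m + 9. -/
inductive Idx (m : ℕ) where
  | A : Fin 5 → Idx m
  | B : Fin m → Idx m
  | C : Fin 2 → Idx m
  | D : Fin 2 → Idx m
  | E : Fin m → Bool → Bool → Idx m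
  | F : Fin m → Bool → Bool → Idx m
  deriving DecidableEq, Fintype

/-- Numeric value of a bit. -/
def bnum (b : Bool) : ℝ := if b then 1 else 0

/-- Real indicator of a decidable proposition. -/
def indC (P : Prop) [Decidable P] : ℝ := if P then 1 else 0

/-- The 5×5 block AA. -/
def AAmat : Matrix (Fin 5) (Fin 5) ℝ :=
  !![1,2,1,1,0; 0,1,2,1,1; 1,0,1,2,1; 1,1,0,1,2; 2,1,1,0,1]

/-- The reflection matrix `R` associated with the counter machine `M`. -/
def Rmat {m : ℕ} (M : CounterMachine m) : Matrix (Idx m) (Idx m) ℝ :=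
  fun p q => match p, q with
  | .A k, .A l => AAmat k l
  | .B _, .A l => if l = 0 then -1 else 0
  | .B j, .B j' => if j' = j then 1 else 0
  | .B j, .E i b c => if (M.Γ i b c).1 = j then 0 else 1
  | .C _, .A l => if l = 0 ∨ l = 3 then -1 else 0
  | .C k, .C k' => if k' = k then 1 else 0
  | .C k, .D k' => if k' = k then 1 else 0
  | .C k, .E i b c =>
      (if k = 0 then ((M.Γ i b c).2.1 : ℝ) else ((M.Γ i b c).2.2 : ℝ)) + 1
  | .D _, .A l => if l = 1 then -1 else 0
  | .D k, .C k' => if k' = k then 1 else 0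
  | .D k, .D k' => if k' = k then 1 else 0
  | .E _ b c, .A l => if l = 0 then -(bnum b) - bnum c else if l = 2 then -1 else 0
  | .E i _ _, .B j => if j = i then -1 else 0
  | .E _ b c, .C k => if k = 0 then 2 * bnum b - 1 else 2 * bnum c - 1
  | .E i b c, .E i' b' c' => if i' = i ∧ b' = b ∧ c' = c then 1 else 0
  | .E i b c, .F i' b' c' => if i' = i ∧ b' = b ∧ c' = c then 1 else 0
  | .F _ b c, .A l => if l = 0 then -(bnum b) - bnum c
      else if l = 2 then -1 else if l = 3 then -4 else if l = 4 then 4 else 0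
  | .F i _ _, .B j => if j = i then -1 else 0
  | .F _ b c, .C k => if k = 0 then 2 * bnum b - 1 else 2 * bnum c - 1
  | .F i b c, .E i' b' c' => if i' = i ∧ b' = b ∧ c' = c then 1 else 0
  | .F i b c, .F i' b' c' => if i' = i ∧ b' = b ∧ c' = c then 1 else 0
  | _, _ => 0

/-- The modified reflection matrix `R*` with halting state `i*`. -/
def RmatStar {m : ℕ} (M : CounterMachine m) (istar : Fin m) :
    Matrix (Idx m) (Idx m) ℝ :=
  fun p q => match p, q with
  | .A k, .B j => if j = istar ∧ (k = 2 ∨ k = 3 ∨ k = 4) then -1 else 0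
  | .E i b c, .B j =>
      if j = istar then -3 + bnum b + bnum c else if j = i then -1 else 0
  | .F i b c, .B j =>
      if j = istar then -4 + bnum b + bnum c else if j = i then -1 else 0
  | p, q => Rmat M p q

/-- The drift vector θ: −1 on the A-coordinates and 0 elsewhere. -/
def thetaVec (m : ℕ) : Idx m → ℝ := fun p => match p with
  | .A _ => -1
  | _ => 0

/-- The encoding `z^{i,C₁,C₂}` of a configuration as a state of the
Skorokhod problem. -/
def encCfg {m : ℕ} (i : Fin m) (C₁ C₂ : ℕ) : Idx m → ℝ := fun p => match p with
  | .A k => if k = 0 ∨ k = 4 then 0 else 1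
  | .B j => if j = i then 0 else 1
  | .C k => if k = 0 then (C₁ : ℝ) else (C₂ : ℝ)
  | .D _ => 0
  | .E _ _ _ => 3
  | .F _ _ _ => 4

/-- The linear input path `x t = z^{i,C₁,C₂} + θ t`. -/
def fluidX {m : ℕ} (i : Fin m) (C₁ C₂ : ℕ) : ℝ → Idx m → ℝ :=
  fun t p => encCfg i C₁ C₂ p + thetaVec m p * t

/-- The quantity Υ(i′,b,c) of the paper (for current configuration (i,C₁,C₂)). -/
def Upsilon {m : ℕ} (i : Fin m) (C₁ C₂ : ℕ) (i' : Fin m) (b c : Bool) : ℝ :=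
  -(bnum b) - bnum c + (2 * bnum b - 1) * indC (C₁ = 0)
    + (2 * bnum c - 1) * indC (C₂ = 0) - indC (i' = i)


section Helpers

private lemma upcross {T S : ℝ} (f : ℝ → ℝ) (hcont : ContinuousOn f (Set.Icc T S))
    (hfT : f T ≤ 0)
    (hstep : ∀ s₁ s₂ : ℝ, T ≤ s₁ → s₁ ≤ s₂ → s₂ ≤ S →
      (∀ s ∈ Set.Ioo s₁ s₂, 0 < f s) → f s₂ ≤ f s₁) :
    ∀ s ∈ Set.Icc T S, f s ≤ 0 := by
  intro s hs
  by_contra hpos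
  push_neg at hpos
  have hTS : T ≤ s := hs.1
  set A : Set ℝ := Set.Icc T s ∩ f ⁻¹' Set.Iic 0 with hA
  have hAsub : A ⊆ Set.Icc T s := Set.inter_subset_left
  have hcont' : ContinuousOn f (Set.Icc T s) :=
    hcont.mono (Set.Icc_subset_Icc le_rfl hs.2)
  have hclosed : IsClosed A :=
    hcont'.preimage_isClosed_of_isClosed isClosed_Icc isClosed_Iic
  have hcomp : IsCompact A :=
    (isCompact_Icc).of_isClosed_subset hclosed hAsub
  have hne : A.Nonempty := ⟨T, ⟨le_rfl, hTS⟩, hfT⟩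
  have hsSup := hcomp.sSup_mem hne
  set c := sSup A with hc
  have hcA : c ∈ A := hsSup
  have hcs : c ≤ s := hcA.1.2
  have hTc : T ≤ c := hcA.1.1
  have hfc : f c ≤ 0 := hcA.2
  have hcs' : c < s := by
    rcases lt_or_eq_of_le hcs with h | h
    · exact h
    · exfalso; rw [h] at hfc; linarith
  have hbdd : BddAbove A := hcomp.bddAbove
  have hmid : ∀ x ∈ Set.Ioo c s, 0 < f x := by
    intro x hx
    by_contra hx0
    push_neg at hx0
    have : x ∈ A := ⟨⟨le_trans hTc hx.1.le, hx.2.le⟩, hx0⟩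
    exact absurd (le_csSup hbdd this) (not_le.mpr hx.1)
  have := hstep c s hTc hcs'.le hs.2 hmid
  linarith

private lemma sum_ge_one {α : Type*} [Fintype α] [DecidableEq α] (f : α → ℝ) (a : α)
    (h : ∀ b, b ≠ a → 0 ≤ f b) : f a ≤ ∑ b, f b := by
  rw [← Finset.add_sum_erase _ f (Finset.mem_univ a)]
  have h2 : 0 ≤ ∑ b ∈ Finset.univ.erase a, f b :=
    Finset.sum_nonneg fun b hb => h b (Finset.mem_erase.mp hb).1
  linarith

private lemma sum_ge_subset {α : Type*} [Fintype α] [DecidableEq α] (f : α → ℝ) (K : Finset α)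
    (h : ∀ b ∉ K, 0 ≤ f b) : ∑ b ∈ K, f b ≤ ∑ b, f b :=
  Finset.sum_le_sum_of_subset_of_nonneg (Finset.subset_univ K) (fun b _ hb => h b hb)

private lemma sum_eq_subset {α : Type*} [Fintype α] [DecidableEq α] (f : α → ℝ) (K : Finset α)
    (h : ∀ b ∉ K, f b = 0) : ∑ b, f b = ∑ b ∈ K, f b :=
  (Finset.sum_subset (Finset.subset_univ K) (fun b _ hb => h b hb)).symm

private lemma move_ge {m : ℕ} (M : CounterMachine m) (i : Fin m) (b c : Bool) :
    (-1 : ℤ) ≤ (M.Γ i b c).2.1 ∧ (-1 : ℤ) ≤ (M.Γ i b c).2.2 := by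
  have h := M.moves i b c
  simp only [Set.mem_insert_iff, Set.mem_singleton_iff, Prod.mk.injEq] at h
  rcases h with ⟨h1, h2⟩ | ⟨h1, h2⟩ | ⟨h1, h2⟩ | ⟨h1, h2⟩ | ⟨h1, h2⟩ <;>
    rw [h1, h2] <;> norm_num

private lemma RA_nn {m : ℕ} (M : CounterMachine m) (k : Fin 5) (q : Idx m) :
    0 ≤ Rmat M (.A k) q := by
  rcases q with l | j | k' | k' | ⟨i1, b1, c1⟩ | ⟨i1, b1, c1⟩
  · fin_cases k <;> fin_cases l <;> norm_num [Rmat, AAmat]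
  all_goals simp [Rmat]

private lemma RB_nn {m : ℕ} (M : CounterMachine m) (j : Fin m) (q : Idx m)
    (h : q ≠ .A 0) : 0 ≤ Rmat M (.B j) q := by
  rcases q with l | j' | k | k | ⟨i1, b1, c1⟩ | ⟨i1, b1, c1⟩
  · have hl : l ≠ 0 := by rintro rfl; exact h rfl
    simp [Rmat, hl]
  · simp only [Rmat]; split <;> norm_num
  · simp [Rmat]
  · simp [Rmat]
  · simp only [Rmat]; split <;> norm_num
  · simp [Rmat]

private lemma RC_nn {m : ℕ} (M : CounterMachine m) (k : Fin 2) (q : Idx m)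
    (h0 : q ≠ .A 0) (h3 : q ≠ .A 3) : 0 ≤ Rmat M (.C k) q := by
  rcases q with l | j | k' | k' | ⟨i1, b1, c1⟩ | ⟨i1, b1, c1⟩
  · have hl : ¬(l = 0 ∨ l = 3) := by
      rintro (rfl | rfl)
      · exact h0 rfl
      · exact h3 rfl
    simp [Rmat, hl]
  · simp [Rmat]
  · simp only [Rmat]; split <;> norm_num
  · simp only [Rmat]; split <;> norm_num
  · have h1 := (move_ge M i1 b1 c1).1
    have h2 := (move_ge M i1 b1 c1).2
    have h1' : (-1 : ℝ) ≤ ((M.Γ i1 b1 c1).2.1 : ℝ) := by exact_mod_cast h1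
    have h2' : (-1 : ℝ) ≤ ((M.Γ i1 b1 c1).2.2 : ℝ) := by exact_mod_cast h2
    by_cases hk : k = 0 <;> simp [Rmat, hk] <;> linarith
  · simp [Rmat]

private lemma RD_nn {m : ℕ} (M : CounterMachine m) (k : Fin 2) (q : Idx m)
    (h : q ≠ .A 1) : 0 ≤ Rmat M (.D k) q := by
  rcases q with l | j | k' | k' | ⟨i1, b1, c1⟩ | ⟨i1, b1, c1⟩
  · have hl : l ≠ 1 := by rintro rfl; exact h rfl
    simp [Rmat, hl]
  · simp [Rmat]
  · simp only [Rmat]; split <;> norm_num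
  · simp only [Rmat]; split <;> norm_num
  · simp [Rmat]
  · simp [Rmat]

private lemma RE_nn {m : ℕ} (M : CounterMachine m) (i' : Fin m) (b c : Bool) (q : Idx m)
    (h0 : q ≠ .A 0) (h2 : q ≠ .A 2) (hB : q ≠ .B i')
    (hC0 : q ≠ .C 0) (hC1 : q ≠ .C 1) : 0 ≤ Rmat M (.E i' b c) q := by
  rcases q with l | j | k | k | ⟨i1, b1, c1⟩ | ⟨i1, b1, c1⟩
  · have hl0 : l ≠ 0 := by rintro rfl; exact h0 rfl
    have hl2 : l ≠ 2 := by rintro rfl; exact h2 rfl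
    simp [Rmat, hl0, hl2]
  · have hj : j ≠ i' := by rintro rfl; exact hB rfl
    simp [Rmat, hj]
  · exfalso
    fin_cases k
    · exact hC0 rfl
    · exact hC1 rfl
  · simp [Rmat]
  · simp only [Rmat]; split <;> norm_num
  · simp only [Rmat]; split <;> norm_num

private lemma RF_nn {m : ℕ} (M : CounterMachine m) (i' : Fin m) (b c : Bool) (q : Idx m)
    (h0 : q ≠ .A 0) (h2 : q ≠ .A 2) (h3 : q ≠ .A 3) (hB : q ≠ .B i')
    (hC0 : q ≠ .C 0) (hC1 : q ≠ .C 1) : 0 ≤ Rmat M (.F i' b c) q := by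
  rcases q with l | j | k | k | ⟨i1, b1, c1⟩ | ⟨i1, b1, c1⟩
  · have hl0 : l ≠ 0 := by rintro rfl; exact h0 rfl
    have hl2 : l ≠ 2 := by rintro rfl; exact h2 rfl
    have hl3 : l ≠ 3 := by rintro rfl; exact h3 rfl
    simp only [Rmat, if_neg hl0, if_neg hl2, if_neg hl3]
    split <;> norm_num
  · have hj : j ≠ i' := by rintro rfl; exact hB rfl
    simp [Rmat, hj]
  · exfalso
    fin_cases k
    · exact hC0 rfl
    · exact hC1 rfl
  · simp [Rmat]
  · simp only [Rmat]; split <;> norm_num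
  · simp only [Rmat]; split <;> norm_num

end Helpers
/-- Dynamics over the interval `(5t, 5t+1)`: `y_{A,1}` and
`y_{B,i}` are active at unit rate, `y_{C,k}` is active at unit rate iff
`C_k = 0`, all remaining `y`-coordinates are passive, and the state `z(5t+1)`
is as indicated. -/
theorem dynamics_interval_0 {m : ℕ} (M : CounterMachine m)
    (i0 : Fin m) (C₁0 C₂0 : ℕ) (y z : ℝ → Idx m → ℝ)
    (h : IsSkorokhodSolution (Rmat M) (fluidX i0 C₁0 C₂0) y z)
    (t : ℕ) (i : Fin m) (C₁ C₂ : ℕ)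
    (htraj : (M.step)^[t] (i0, C₁0, C₂0) = (i, C₁, C₂))
    (hz : z (5 * (t : ℝ)) = encCfg i C₁ C₂) :
    (UnitActive (fun s => y s (.A 0)) (5 * (t : ℝ)) (5 * (t : ℝ) + 1)) ∧
    (UnitActive (fun s => y s (.B i)) (5 * (t : ℝ)) (5 * (t : ℝ) + 1)) ∧
    (C₁ = 0 → UnitActive (fun s => y s (.C 0)) (5 * (t : ℝ)) (5 * (t : ℝ) + 1)) ∧
    (0 < C₁ → Passive (fun s => y s (.C 0)) (5 * (t : ℝ)) (5 * (t : ℝ) + 1)) ∧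
    (C₂ = 0 → UnitActive (fun s => y s (.C 1)) (5 * (t : ℝ)) (5 * (t : ℝ) + 1)) ∧
    (0 < C₂ → Passive (fun s => y s (.C 1)) (5 * (t : ℝ)) (5 * (t : ℝ) + 1)) ∧
    (∀ k : Fin 5, k ≠ 0 →
      Passive (fun s => y s (.A k)) (5 * (t : ℝ)) (5 * (t : ℝ) + 1)) ∧
    (∀ j : Fin m, j ≠ i →
      Passive (fun s => y s (.B j)) (5 * (t : ℝ)) (5 * (t : ℝ) + 1)) ∧
    (∀ k : Fin 2, Passive (fun s => y s (.D k)) (5 * (t : ℝ)) (5 * (t : ℝ) + 1)) ∧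
    (∀ (i' : Fin m) (b c : Bool),
      Passive (fun s => y s (.E i' b c)) (5 * (t : ℝ)) (5 * (t : ℝ) + 1)) ∧
    (∀ (i' : Fin m) (b c : Bool),
      Passive (fun s => y s (.F i' b c)) (5 * (t : ℝ)) (5 * (t : ℝ) + 1)) ∧
    (z (5 * (t : ℝ) + 1) (.A 0) = 0 ∧ z (5 * (t : ℝ) + 1) (.A 1) = 0 ∧
      z (5 * (t : ℝ) + 1) (.A 2) = 1 ∧ z (5 * (t : ℝ) + 1) (.A 3) = 1 ∧
      z (5 * (t : ℝ) + 1) (.A 4) = 1) ∧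
    (∀ j : Fin m, z (5 * (t : ℝ) + 1) (.B j) = 0) ∧
    (z (5 * (t : ℝ) + 1) (.C 0) = (C₁ : ℝ) - 1 + indC (C₁ = 0)) ∧
    (z (5 * (t : ℝ) + 1) (.C 1) = (C₂ : ℝ) - 1 + indC (C₂ = 0)) ∧
    (z (5 * (t : ℝ) + 1) (.D 0) = indC (C₁ = 0)) ∧
    (z (5 * (t : ℝ) + 1) (.D 1) = indC (C₂ = 0)) ∧
    (∀ (i' : Fin m) (b c : Bool),
      z (5 * (t : ℝ) + 1) (.E i' b c) = 3 + Upsilon i C₁ C₂ i' b c) ∧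
    (∀ (i' : Fin m) (b c : Bool),
      z (5 * (t : ℝ) + 1) (.F i' b c) = 4 + Upsilon i C₁ C₂ i' b c) := by
  obtain ⟨hycont, hzcont, heq, hznn, hy0, hmono, hflat⟩ := h
  set T : ℝ := 5 * (t : ℝ) with hTdef
  have hT0 : (0 : ℝ) ≤ T := by positivity
  have hT1 : T ≤ T + 1 := by linarith
  -- basic identity
  have hzid : ∀ s : ℝ, T ≤ s → ∀ p : Idx m,
      z s p = encCfg i C₁ C₂ p + thetaVec m p * (s - T)
        + ∑ q, Rmat M p q * (y s q - y T q) := by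
    intro s hs p
    have h1 := congrFun (heq s (hT0.trans hs)) p
    have h2 := congrFun (heq T hT0) p
    rw [hz] at h2
    simp only [Pi.add_apply, Matrix.mulVec, dotProduct, fluidX] at h1 h2
    simp only [mul_sub, Finset.sum_sub_distrib]
    rw [h1, h2]
    ring
  have hYnn : ∀ s : ℝ, T ≤ s → ∀ q : Idx m, 0 ≤ y s q - y T q := by
    intro s hs q
    have := hmono q (Set.mem_Ici.mpr hT0) (Set.mem_Ici.mpr (hT0.trans hs)) hs
    simpa using this
  have hYcont : ∀ q : Idx m, ContinuousOn (fun s => y s q) (Set.Icc T (T + 1)) := by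
    intro q
    have h1 : ContinuousOn (fun s => y s q) (Set.Ici (0 : ℝ)) :=
      (continuous_apply q).comp_continuousOn hycont
    exact h1.mono (fun x hx => Set.mem_Ici.mpr (hT0.trans hx.1))
  -- passivity from positivity
  have hpassive : ∀ j : Idx m, (∀ s : ℝ, T < s → s < T + 1 → 0 < z s j) →
      ∀ s : ℝ, T ≤ s → s ≤ T + 1 → y s j - y T j = 0 := by
    intro j hp s hs1 hs2
    have h := hflat j T s hT0 hs1 (fun x hx => hp x hx.1 (lt_of_lt_of_le hx.2 hs2))
    rw [h, sub_self]
  -- upper rate bound via upcross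
  have hub : ∀ (j : Idx m) (r : ℝ), 0 ≤ r →
      (∀ s : ℝ, T < s → s ≤ T + 1 → r * (s - T) < y s j - y T j → 0 < z s j) →
      ∀ s : ℝ, T ≤ s → s ≤ T + 1 → y s j - y T j ≤ r * (s - T) := by
    intro j r hr hp s hs1 hs2
    have key : ∀ s ∈ Set.Icc T (T + 1), y s j - y T j - r * (s - T) ≤ 0 := by
      apply upcross
      · exact ((hYcont j).sub continuousOn_const).sub
          ((continuous_const.mul (continuous_id.sub continuous_const)).continuousOn)
      · simp
      · intro s₁ s₂ h1 h2 h3 hpos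
        have hyeq := hflat j s₁ s₂ (hT0.trans h1) h2 ?_
        · rw [hyeq]
          have : r * (s₁ - T) ≤ r * (s₂ - T) :=
            mul_le_mul_of_nonneg_left (by linarith) hr
          linarith
        · intro x hx
          exact hp x (lt_of_le_of_lt h1 hx.1) (le_trans hx.2.le h3)
            (by linarith [hpos x hx])
    have := key s ⟨hs1, hs2⟩
    linarith
  -- A1, A2, A3 passive
  have hApass : ∀ l : Fin 5, l ≠ 0 → l ≠ 4 →
      ∀ s : ℝ, T ≤ s → s ≤ T + 1 → y s (.A l) - y T (.A l) = 0 := by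
    intro l hl0 hl4
    apply hpassive
    intro s hs1 hs2
    rw [hzid s hs1.le (.A l)]
    have hsum : 0 ≤ ∑ q, Rmat M (.A l) q * (y s q - y T q) :=
      Finset.sum_nonneg fun q _ => mul_nonneg (RA_nn M l q) (hYnn s hs1.le q)
    have henc : encCfg i C₁ C₂ (.A l) = 1 := by simp [encCfg, hl0, hl4]
    have hth : thetaVec m (.A l) = -1 := rfl
    rw [henc, hth]
    linarith
  have hA1 := hApass 1 (by decide) (by decide)
  have hA2 := hApass 2 (by decide) (by decide)
  have hA3 := hApass 3 (by decide) (by decide)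
  -- A0 at unit rate
  have hA0le : ∀ s : ℝ, T ≤ s → s ≤ T + 1 → y s (.A 0) - y T (.A 0) ≤ s - T := by
    intro s hs1 hs2
    have h := hub (.A 0) 1 zero_le_one ?_ s hs1 hs2
    · linarith
    intro x hx1 hx2 hgt
    rw [hzid x hx1.le (.A 0)]
    have hsingle : Rmat M (.A 0) (.A 0) * (y x (.A 0) - y T (.A 0))
        ≤ ∑ q, Rmat M (.A 0) q * (y x q - y T q) :=
      sum_ge_one _ _ (fun q _ => mul_nonneg (RA_nn M 0 q) (hYnn x hx1.le q))
    have hRA : Rmat M (.A 0) (.A 0) = 1 := by norm_num [Rmat, AAmat]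
    rw [hRA, one_mul] at hsingle
    have henc : encCfg i C₁ C₂ (.A 0) = 0 := by simp [encCfg]
    rw [henc]
    simp only [thetaVec]
    linarith
  have hA0sum : ∀ s : ℝ, T ≤ s → s ≤ T + 1 →
      ∑ q, Rmat M (.A 0) q * (y s q - y T q) = y s (.A 0) - y T (.A 0) := by
    intro s hs1 hs2
    rw [sum_eq_subset _ {Idx.A 0} ?_, Finset.sum_singleton]
    · have hRA : Rmat M (.A 0) (.A 0) = 1 := by norm_num [Rmat, AAmat]
      rw [hRA, one_mul]
    intro q hq
    simp only [Finset.mem_singleton] at hq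
    rcases q with l | j | k | k | ⟨i1, b1, c1⟩ | ⟨i1, b1, c1⟩
    · have hl0 : l ≠ 0 := by rintro rfl; exact hq rfl
      by_cases hl4 : l = 4
      · subst hl4
        have hR : Rmat M (.A 0) (.A 4) = 0 := by simp [Rmat, AAmat]
        rw [hR, zero_mul]
      · rw [hApass l hl0 hl4 s hs1 hs2, mul_zero]
    all_goals simp [Rmat]
  have hA0 : ∀ s : ℝ, T ≤ s → s ≤ T + 1 → y s (.A 0) - y T (.A 0) = s - T := by
    intro s hs1 hs2
    have hge := hznn s (hT0.trans hs1) (.A 0)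
    rw [hzid s hs1 (.A 0), hA0sum s hs1 hs2] at hge
    have henc : encCfg i C₁ C₂ (.A 0) = 0 := by simp [encCfg]
    rw [henc] at hge
    simp only [thetaVec] at hge
    have := hA0le s hs1 hs2
    linarith
  -- A4 passive
  have hA4 : ∀ s : ℝ, T ≤ s → s ≤ T + 1 → y s (.A 4) - y T (.A 4) = 0 := by
    apply hpassive
    intro s hs1 hs2
    rw [hzid s hs1.le (.A 4)]
    have hsingle : Rmat M (.A 4) (.A 0) * (y s (.A 0) - y T (.A 0))
        ≤ ∑ q, Rmat M (.A 4) q * (y s q - y T q) :=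
      sum_ge_one _ _ (fun q _ => mul_nonneg (RA_nn M 4 q) (hYnn s hs1.le q))
    have hRA : Rmat M (.A 4) (.A 0) = 2 := by simp [Rmat, AAmat]
    rw [hRA, hA0 s hs1.le hs2.le] at hsingle
    have henc : encCfg i C₁ C₂ (.A 4) = 0 := by simp [encCfg]
    rw [henc]
    simp only [thetaVec]
    linarith
  -- B j passive for j ≠ i
  have hBj : ∀ j : Fin m, j ≠ i → ∀ s : ℝ, T ≤ s → s ≤ T + 1 →
      y s (.B j) - y T (.B j) = 0 := by
    intro j hj
    apply hpassive
    intro s hs1 hs2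
    rw [hzid s hs1.le (.B j)]
    have hsingle : Rmat M (.B j) (.A 0) * (y s (.A 0) - y T (.A 0))
        ≤ ∑ q, Rmat M (.B j) q * (y s q - y T q) :=
      sum_ge_one _ _ (fun q hq => mul_nonneg (RB_nn M j q hq) (hYnn s hs1.le q))
    have hRB : Rmat M (.B j) (.A 0) = -1 := by simp [Rmat]
    rw [hRB, hA0 s hs1.le hs2.le] at hsingle
    have henc : encCfg i C₁ C₂ (.B j) = 1 := by simp [encCfg, hj]
    rw [henc]
    simp only [thetaVec]
    linarith
  -- D passive
  have hD0 : ∀ k : Fin 2, ∀ s : ℝ, T ≤ s → s ≤ T + 1 →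
      y s (.D k) - y T (.D k) = 0 := by
    intro k s hs1 hs2
    have hle := hub (.D k) 0 le_rfl ?_ s hs1 hs2
    · have := hYnn s hs1 (.D k); linarith
    intro x hx1 hx2 hgt
    rw [zero_mul] at hgt
    rw [hzid x hx1.le (.D k)]
    have hsingle : Rmat M (.D k) (.D k) * (y x (.D k) - y T (.D k))
        ≤ ∑ q, Rmat M (.D k) q * (y x q - y T q) := by
      refine sum_ge_one (fun q => Rmat M (.D k) q * (y x q - y T q)) (Idx.D k) ?_
      intro q hq
      by_cases hqa : q = Idx.A 1
      · subst hqa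
        show (0:ℝ) ≤ Rmat M (.D k) (.A 1) * (y x (.A 1) - y T (.A 1))
        rw [hA1 x hx1.le hx2]; norm_num
      · exact mul_nonneg (RD_nn M k q hqa) (hYnn x hx1.le q)
    have hRD : Rmat M (.D k) (.D k) = 1 := by simp [Rmat]
    rw [hRD, one_mul] at hsingle
    have henc : encCfg i C₁ C₂ (.D k) = 0 := by simp [encCfg]
    rw [henc]
    simp only [thetaVec]
    linarith
  -- C k passive when counter positive
  have hCgenpos : ∀ k : Fin 2, (1 : ℝ) ≤ encCfg i C₁ C₂ (.C k) →
      ∀ s : ℝ, T ≤ s → s ≤ T + 1 → y s (.C k) - y T (.C k) = 0 := by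
    intro k hk
    apply hpassive
    intro s hs1 hs2
    rw [hzid s hs1.le (.C k)]
    have hsingle : Rmat M (.C k) (.A 0) * (y s (.A 0) - y T (.A 0))
        ≤ ∑ q, Rmat M (.C k) q * (y s q - y T q) := by
      refine sum_ge_one (fun q => Rmat M (.C k) q * (y s q - y T q)) (Idx.A 0) ?_
      intro q hq
      by_cases hq3 : q = Idx.A 3
      · subst hq3
        show (0:ℝ) ≤ Rmat M (.C k) (.A 3) * (y s (.A 3) - y T (.A 3))
        rw [hA3 s hs1.le hs2.le]; norm_num
      · exact mul_nonneg (RC_nn M k q hq hq3) (hYnn s hs1.le q)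
    have hRC : Rmat M (.C k) (.A 0) = -1 := by simp [Rmat]
    rw [hRC, hA0 s hs1.le hs2.le] at hsingle
    simp only [thetaVec]
    linarith
  -- C k grows at most at unit rate
  have hCle : ∀ k : Fin 2, ∀ s : ℝ, T ≤ s → s ≤ T + 1 →
      y s (.C k) - y T (.C k) ≤ s - T := by
    intro k s hs1 hs2
    have h := hub (.C k) 1 zero_le_one ?_ s hs1 hs2
    · linarith
    intro x hx1 hx2 hgt
    rw [hzid x hx1.le (.C k)]
    have hsub := sum_ge_subset (fun q => Rmat M (.C k) q * (y x q - y T q))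
      {Idx.A 0, Idx.C k} ?_
    · rw [Finset.sum_pair (by simp)] at hsub
      have h1 : Rmat M (.C k) (.A 0) = -1 := by simp [Rmat]
      have h2 : Rmat M (.C k) (.C k) = 1 := by simp [Rmat]
      rw [h1, h2, hA0 x hx1.le hx2, one_mul] at hsub
      have hencnn : (0 : ℝ) ≤ encCfg i C₁ C₂ (.C k) := by
        by_cases hk : k = 0
        · subst hk; simp [encCfg]
        · simp [encCfg, hk]
      simp only [thetaVec]
      linarith
    intro q hq
    simp only [Finset.mem_insert, Finset.mem_singleton, not_or] at hq
    by_cases hq3 : q = Idx.A 3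
    · subst hq3
      show (0:ℝ) ≤ Rmat M (.C k) (.A 3) * (y x (.A 3) - y T (.A 3))
      rw [hA3 x hx1.le hx2]; norm_num
    · exact mul_nonneg (RC_nn M k q hq.1 hq3) (hYnn x hx1.le q)
  -- B i grows at most at unit rate
  have hBile : ∀ s : ℝ, T ≤ s → s ≤ T + 1 → y s (.B i) - y T (.B i) ≤ s - T := by
    intro s hs1 hs2
    have h := hub (.B i) 1 zero_le_one ?_ s hs1 hs2
    · linarith
    intro x hx1 hx2 hgt
    rw [hzid x hx1.le (.B i)]
    have hsub := sum_ge_subset (fun q => Rmat M (.B i) q * (y x q - y T q))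
      {Idx.A 0, Idx.B i} ?_
    · rw [Finset.sum_pair (by simp)] at hsub
      have h1 : Rmat M (.B i) (.A 0) = -1 := by simp [Rmat]
      have h2 : Rmat M (.B i) (.B i) = 1 := by simp [Rmat]
      rw [h1, h2, hA0 x hx1.le hx2, one_mul] at hsub
      have henc : encCfg i C₁ C₂ (.B i) = 0 := by simp [encCfg]
      rw [henc]
      simp only [thetaVec]
      linarith
    intro q hq
    simp only [Finset.mem_insert, Finset.mem_singleton, not_or] at hq
    exact mul_nonneg (RB_nn M i q hq.1) (hYnn x hx1.le q)
  have hYB_le : ∀ j : Fin m, ∀ s : ℝ, T ≤ s → s ≤ T + 1 →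
      y s (.B j) - y T (.B j) ≤ s - T := by
    intro j s hs1 hs2
    by_cases hj : j = i
    · subst hj; exact hBile s hs1 hs2
    · rw [hBj j hj s hs1 hs2]; linarith
  -- E coordinates passive
  have hE0 : ∀ (i' : Fin m) (b c : Bool), ∀ s : ℝ, T ≤ s → s ≤ T + 1 →
      y s (.E i' b c) - y T (.E i' b c) = 0 := by
    intro i' b c
    apply hpassive
    intro s hs1 hs2
    rw [hzid s hs1.le (.E i' b c)]
    have hsub := sum_ge_subset (fun q => Rmat M (.E i' b c) q * (y s q - y T q))
      {Idx.A 0, Idx.A 2, Idx.B i', Idx.C 0, Idx.C 1} ?_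
    · rw [Finset.sum_insert (by simp), Finset.sum_insert (by simp),
          Finset.sum_insert (by simp), Finset.sum_pair (by simp)] at hsub
      have e0 : Rmat M (.E i' b c) (.A 0) = -(bnum b) - bnum c := by simp [Rmat]
      have e2 : Rmat M (.E i' b c) (.A 2) = -1 := by simp [Rmat]
      have eB : Rmat M (.E i' b c) (.B i') = -1 := by simp [Rmat]
      have eC0 : Rmat M (.E i' b c) (.C 0) = 2 * bnum b - 1 := by simp [Rmat]
      have eC1 : Rmat M (.E i' b c) (.C 1) = 2 * bnum c - 1 := by simp [Rmat]
      rw [e0, e2, eB, eC0, eC1, hA0 s hs1.le hs2.le, hA2 s hs1.le hs2.le] at hsub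
      have hb0 : 0 ≤ y s (.C 0) - y T (.C 0) := hYnn s hs1.le _
      have hb1 := hCle 0 s hs1.le hs2.le
      have hc0 : 0 ≤ y s (.C 1) - y T (.C 1) := hYnn s hs1.le _
      have hc1 := hCle 1 s hs1.le hs2.le
      have hB0 : 0 ≤ y s (.B i') - y T (.B i') := hYnn s hs1.le _
      have hB1 := hYB_le i' s hs1.le hs2.le
      have henc : encCfg i C₁ C₂ (.E i' b c) = 3 := rfl
      rw [henc]
      simp only [thetaVec]
      cases b <;> cases c <;> simp only [bnum] at hsub <;> norm_num at hsub ⊢ <;> linarith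
    intro q hq
    simp only [Finset.mem_insert, Finset.mem_singleton, not_or] at hq
    obtain ⟨g0, g2, gB, gC0, gC1⟩ := hq
    exact mul_nonneg (RE_nn M i' b c q g0 g2 gB gC0 gC1) (hYnn s hs1.le q)
  -- F coordinates passive
  have hF0 : ∀ (i' : Fin m) (b c : Bool), ∀ s : ℝ, T ≤ s → s ≤ T + 1 →
      y s (.F i' b c) - y T (.F i' b c) = 0 := by
    intro i' b c
    apply hpassive
    intro s hs1 hs2
    rw [hzid s hs1.le (.F i' b c)]
    have hsub := sum_ge_subset (fun q => Rmat M (.F i' b c) q * (y s q - y T q))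
      {Idx.A 0, Idx.A 2, Idx.A 3, Idx.B i', Idx.C 0, Idx.C 1} ?_
    · rw [Finset.sum_insert (by simp), Finset.sum_insert (by simp),
          Finset.sum_insert (by simp), Finset.sum_insert (by simp),
          Finset.sum_pair (by simp)] at hsub
      have e0 : Rmat M (.F i' b c) (.A 0) = -(bnum b) - bnum c := by simp [Rmat]
      have e2 : Rmat M (.F i' b c) (.A 2) = -1 := by simp [Rmat]
      have e3 : Rmat M (.F i' b c) (.A 3) = -4 := by simp [Rmat]
      have eB : Rmat M (.F i' b c) (.B i') = -1 := by simp [Rmat]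
      have eC0 : Rmat M (.F i' b c) (.C 0) = 2 * bnum b - 1 := by simp [Rmat]
      have eC1 : Rmat M (.F i' b c) (.C 1) = 2 * bnum c - 1 := by simp [Rmat]
      rw [e0, e2, e3, eB, eC0, eC1, hA0 s hs1.le hs2.le, hA2 s hs1.le hs2.le,
          hA3 s hs1.le hs2.le] at hsub
      have hb0 : 0 ≤ y s (.C 0) - y T (.C 0) := hYnn s hs1.le _
      have hb1 := hCle 0 s hs1.le hs2.le
      have hc0 : 0 ≤ y s (.C 1) - y T (.C 1) := hYnn s hs1.le _
      have hc1 := hCle 1 s hs1.le hs2.le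
      have hB0 : 0 ≤ y s (.B i') - y T (.B i') := hYnn s hs1.le _
      have hB1 := hYB_le i' s hs1.le hs2.le
      have henc : encCfg i C₁ C₂ (.F i' b c) = 4 := rfl
      rw [henc]
      simp only [thetaVec]
      cases b <;> cases c <;> simp only [bnum] at hsub <;> norm_num at hsub ⊢ <;> linarith
    intro q hq
    simp only [Finset.mem_insert, Finset.mem_singleton, not_or] at hq
    obtain ⟨g0, g2, g3, gB, gC0, gC1⟩ := hq
    exact mul_nonneg (RF_nn M i' b c q g0 g2 g3 gB gC0 gC1) (hYnn s hs1.le q)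
  -- exact sum for row B i
  have hBisum : ∀ s : ℝ, T ≤ s → s ≤ T + 1 →
      ∑ q, Rmat M (.B i) q * (y s q - y T q)
        = -(s - T) + (y s (.B i) - y T (.B i)) := by
    intro s hs1 hs2
    rw [sum_eq_subset _ {Idx.A 0, Idx.B i} ?_]
    · rw [Finset.sum_pair (by simp)]
      have h1 : Rmat M (.B i) (.A 0) = -1 := by simp [Rmat]
      have h2 : Rmat M (.B i) (.B i) = 1 := by simp [Rmat]
      rw [h1, h2, hA0 s hs1 hs2, one_mul]
      ring
    intro q hq
    simp only [Finset.mem_insert, Finset.mem_singleton, not_or] at hq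
    rcases q with l | j | k | k | ⟨i1, b1, c1⟩ | ⟨i1, b1, c1⟩
    · have hl0 : l ≠ 0 := by rintro rfl; exact hq.1 rfl
      by_cases hl4 : l = 4
      · subst hl4; rw [hA4 s hs1 hs2, mul_zero]
      · rw [hApass l hl0 hl4 s hs1 hs2, mul_zero]
    · have hji : j ≠ i := by rintro rfl; exact hq.2 rfl
      rw [hBj j hji s hs1 hs2, mul_zero]
    · simp [Rmat]
    · simp [Rmat]
    · rw [hE0 i1 b1 c1 s hs1 hs2, mul_zero]
    · simp [Rmat]
  have hBiu : ∀ s : ℝ, T ≤ s → s ≤ T + 1 → y s (.B i) - y T (.B i) = s - T := by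
    intro s hs1 hs2
    have hge := hznn s (hT0.trans hs1) (.B i)
    rw [hzid s hs1 (.B i), hBisum s hs1 hs2] at hge
    have henc : encCfg i C₁ C₂ (.B i) = 0 := by simp [encCfg]
    rw [henc] at hge
    simp only [thetaVec] at hge
    have := hBile s hs1 hs2
    linarith
  -- exact sum for C rows
  have hCsum : ∀ k : Fin 2, ∀ s : ℝ, T ≤ s → s ≤ T + 1 →
      ∑ q, Rmat M (.C k) q * (y s q - y T q)
        = -(s - T) + (y s (.C k) - y T (.C k)) := by
    intro k s hs1 hs2
    rw [sum_eq_subset _ {Idx.A 0, Idx.C k} ?_]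
    · rw [Finset.sum_pair (by simp)]
      have h1 : Rmat M (.C k) (.A 0) = -1 := by simp [Rmat]
      have h2 : Rmat M (.C k) (.C k) = 1 := by simp [Rmat]
      rw [h1, h2, hA0 s hs1 hs2, one_mul]
      ring
    intro q hq
    simp only [Finset.mem_insert, Finset.mem_singleton, not_or] at hq
    rcases q with l | j | k' | k' | ⟨i1, b1, c1⟩ | ⟨i1, b1, c1⟩
    · have hl0 : l ≠ 0 := by rintro rfl; exact hq.1 rfl
      by_cases hl4 : l = 4
      · subst hl4; rw [hA4 s hs1 hs2, mul_zero]
      · rw [hApass l hl0 hl4 s hs1 hs2, mul_zero]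
    · simp [Rmat]
    · have hkk : k' ≠ k := by rintro rfl; exact hq.2 rfl
      have hR : Rmat M (.C k) (.C k') = 0 := by simp [Rmat, hkk]
      rw [hR, zero_mul]
    · rw [hD0 k' s hs1 hs2, mul_zero]
    · rw [hE0 i1 b1 c1 s hs1 hs2, mul_zero]
    · simp [Rmat]
  have hCzero : ∀ k : Fin 2, encCfg i C₁ C₂ (.C k) = 0 →
      ∀ s : ℝ, T ≤ s → s ≤ T + 1 → y s (.C k) - y T (.C k) = s - T := by
    intro k hk s hs1 hs2
    have hge := hznn s (hT0.trans hs1) (.C k)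
    rw [hzid s hs1 (.C k), hCsum k s hs1 hs2, hk] at hge
    simp only [thetaVec] at hge
    have := hCle k s hs1 hs2
    linarith
  -- endpoint values of y
  have hC0fin : y (T + 1) (.C 0) - y T (.C 0) = indC (C₁ = 0) := by
    by_cases h0 : C₁ = 0
    · rw [hCzero 0 (by simp [encCfg, h0]) (T + 1) hT1 le_rfl]
      simp [indC, h0]
    · rw [hCgenpos 0 ?_ (T + 1) hT1 le_rfl]
      · simp [indC, h0]
      · have h1 : (1 : ℕ) ≤ C₁ := Nat.one_le_iff_ne_zero.mpr h0
        show (1:ℝ) ≤ encCfg i C₁ C₂ (.C 0)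
        simp only [encCfg]
        norm_num
        exact_mod_cast h1
  have hC1fin : y (T + 1) (.C 1) - y T (.C 1) = indC (C₂ = 0) := by
    by_cases h0 : C₂ = 0
    · rw [hCzero 1 (by simp [encCfg, h0]) (T + 1) hT1 le_rfl]
      simp [indC, h0]
    · rw [hCgenpos 1 ?_ (T + 1) hT1 le_rfl]
      · simp [indC, h0]
      · have h1 : (1 : ℕ) ≤ C₂ := Nat.one_le_iff_ne_zero.mpr h0
        show (1:ℝ) ≤ encCfg i C₁ C₂ (.C 1)
        simp only [encCfg]
        norm_num
        exact_mod_cast h1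
  -- master endpoint formula
  have hfin : ∀ p : Idx m, z (T + 1) p
      = encCfg i C₁ C₂ p + thetaVec m p
        + (Rmat M p (.A 0) + Rmat M p (.B i)
           + Rmat M p (.C 0) * indC (C₁ = 0) + Rmat M p (.C 1) * indC (C₂ = 0)) := by
    intro p
    rw [hzid (T + 1) hT1 p]
    rw [sum_eq_subset _ {Idx.A 0, Idx.B i, Idx.C 0, Idx.C 1} ?_]
    · rw [Finset.sum_insert (by simp), Finset.sum_insert (by simp),
          Finset.sum_pair (by simp)]
      rw [hA0 (T + 1) hT1 le_rfl, hBiu (T + 1) hT1 le_rfl, hC0fin, hC1fin]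
      ring
    intro q hq
    simp only [Finset.mem_insert, Finset.mem_singleton, not_or] at hq
    rcases q with l | j | k | k | ⟨i1, b1, c1⟩ | ⟨i1, b1, c1⟩
    · have hl0 : l ≠ 0 := by rintro rfl; exact hq.1 rfl
      by_cases hl4 : l = 4
      · subst hl4; rw [hA4 (T + 1) hT1 le_rfl, mul_zero]
      · rw [hApass l hl0 hl4 (T + 1) hT1 le_rfl, mul_zero]
    · have hji : j ≠ i := by rintro rfl; exact hq.2.1 rfl
      rw [hBj j hji (T + 1) hT1 le_rfl, mul_zero]
    · exfalso
      fin_cases k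
      · exact hq.2.2.1 rfl
      · exact hq.2.2.2 rfl
    · rw [hD0 k (T + 1) hT1 le_rfl, mul_zero]
    · rw [hE0 i1 b1 c1 (T + 1) hT1 le_rfl, mul_zero]
    · rw [hF0 i1 b1 c1 (T + 1) hT1 le_rfl, mul_zero]
  -- final z values
  have hencA : ∀ l : Fin 5, ¬(l = 0 ∨ l = 4) → encCfg i C₁ C₂ (.A l) = 1 := by
    intro l hl
    simp only [encCfg]
    rw [if_neg hl]
  have hencA4 : encCfg i C₁ C₂ (.A 4) = 0 := by
    simp only [encCfg]
    rw [if_pos (by norm_num)]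
  have hzA : z (T + 1) (.A 0) = 0 ∧ z (T + 1) (.A 1) = 0 ∧ z (T + 1) (.A 2) = 1 ∧
      z (T + 1) (.A 3) = 1 ∧ z (T + 1) (.A 4) = 1 := by
    refine ⟨?_, ?_, ?_, ?_, ?_⟩
    · rw [hfin, show encCfg i C₁ C₂ (.A 0) = 0 by simp [encCfg]]
      norm_num [Rmat, AAmat, thetaVec]
    · rw [hfin, hencA 1 (by decide)]
      norm_num [Rmat, AAmat, thetaVec]
    · rw [hfin, hencA 2 (by decide)]
      norm_num [Rmat, AAmat, thetaVec]
      simp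
    · rw [hfin, hencA 3 (by decide)]
      norm_num [Rmat, AAmat, thetaVec]
      simp
    · rw [hfin, hencA4]
      norm_num [Rmat, AAmat, thetaVec]
      simp
      norm_num
  have hzB : ∀ j : Fin m, z (T + 1) (.B j) = 0 := by
    intro j
    rw [hfin (.B j)]
    by_cases hj : j = i
    · subst hj
      norm_num [Rmat, encCfg, thetaVec]
    · norm_num [Rmat, encCfg, thetaVec, hj, Ne.symm hj]
  have hzC0 : z (T + 1) (.C 0) = (C₁ : ℝ) - 1 + indC (C₁ = 0) := by
    rw [hfin (.C 0)]
    norm_num [Rmat, encCfg, thetaVec]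
    ring
  have hzC1 : z (T + 1) (.C 1) = (C₂ : ℝ) - 1 + indC (C₂ = 0) := by
    rw [hfin (.C 1)]
    norm_num [Rmat, encCfg, thetaVec]
    ring
  have hzD0 : z (T + 1) (.D 0) = indC (C₁ = 0) := by
    rw [hfin (.D 0)]
    norm_num [Rmat, encCfg, thetaVec]
  have hzD1 : z (T + 1) (.D 1) = indC (C₂ = 0) := by
    rw [hfin (.D 1)]
    norm_num [Rmat, encCfg, thetaVec]
  have hzE : ∀ (i' : Fin m) (b c : Bool),
      z (T + 1) (.E i' b c) = 3 + Upsilon i C₁ C₂ i' b c := by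
    intro i' b c
    rw [hfin (.E i' b c)]
    have e0 : Rmat M (.E i' b c) (.A 0) = -(bnum b) - bnum c := by simp [Rmat]
    have eC0 : Rmat M (.E i' b c) (.C 0) = 2 * bnum b - 1 := by simp [Rmat]
    have eC1 : Rmat M (.E i' b c) (.C 1) = 2 * bnum c - 1 := by simp [Rmat]
    have henc : encCfg i C₁ C₂ (.E i' b c) = 3 := rfl
    have hth : thetaVec m (.E i' b c) = 0 := rfl
    rw [e0, eC0, eC1, henc, hth]
    rcases eq_or_ne i' i with hii | hii
    · subst hii
      have eB : Rmat M (.E i' b c) (.B i') = -1 := by simp [Rmat]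
      rw [eB]
      have hind : indC True = (1:ℝ) := by simp [indC]
      simp only [Upsilon]
      rw [hind]
      ring
    · have eB : Rmat M (.E i' b c) (.B i) = 0 := by simp [Rmat, Ne.symm hii]
      rw [eB]
      have hind : indC (i' = i) = (0:ℝ) := by simp [indC, hii]
      simp only [Upsilon]
      rw [hind]
      ring
  have hzF : ∀ (i' : Fin m) (b c : Bool),
      z (T + 1) (.F i' b c) = 4 + Upsilon i C₁ C₂ i' b c := by
    intro i' b c
    rw [hfin (.F i' b c)]
    have e0 : Rmat M (.F i' b c) (.A 0) = -(bnum b) - bnum c := by simp [Rmat]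
    have eC0 : Rmat M (.F i' b c) (.C 0) = 2 * bnum b - 1 := by simp [Rmat]
    have eC1 : Rmat M (.F i' b c) (.C 1) = 2 * bnum c - 1 := by simp [Rmat]
    have henc : encCfg i C₁ C₂ (.F i' b c) = 4 := rfl
    have hth : thetaVec m (.F i' b c) = 0 := rfl
    rw [e0, eC0, eC1, henc, hth]
    rcases eq_or_ne i' i with hii | hii
    · subst hii
      have eB : Rmat M (.F i' b c) (.B i') = -1 := by simp [Rmat]
      rw [eB]
      have hind : indC True = (1:ℝ) := by simp [indC]
      simp only [Upsilon]
      rw [hind]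
      ring
    · have eB : Rmat M (.F i' b c) (.B i) = 0 := by simp [Rmat, Ne.symm hii]
      rw [eB]
      have hind : indC (i' = i) = (0:ℝ) := by simp [indC, hii]
      simp only [Upsilon]
      rw [hind]
      ring
  -- assemble
  refine ⟨?_, ?_, ?_, ?_, ?_, ?_, ?_, ?_, ?_, ?_, ?_, hzA, hzB, hzC0, hzC1,
      hzD0, hzD1, hzE, hzF⟩
  · intro s hs
    show y s (.A 0) - y T (.A 0) = 1 * (s - T)
    rw [one_mul]
    exact hA0 s hs.1.le hs.2.le
  · intro s hs
    show y s (.B i) - y T (.B i) = 1 * (s - T)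
    rw [one_mul]
    exact hBiu s hs.1.le hs.2.le
  · intro h0 s hs
    show y s (.C 0) - y T (.C 0) = 1 * (s - T)
    rw [one_mul]
    exact hCzero 0 (by simp [encCfg, h0]) s hs.1.le hs.2.le
  · intro h0 s hs
    show y s (.C 0) = y T (.C 0)
    have h1 : (1:ℝ) ≤ encCfg i C₁ C₂ (.C 0) := by
      have h2 : (1 : ℕ) ≤ C₁ := h0
      simp only [encCfg]
      norm_num
      exact_mod_cast h2
    have := hCgenpos 0 h1 s hs.1.le hs.2.le
    linarith
  · intro h0 s hs
    show y s (.C 1) - y T (.C 1) = 1 * (s - T)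
    rw [one_mul]
    exact hCzero 1 (by simp [encCfg, h0]) s hs.1.le hs.2.le
  · intro h0 s hs
    show y s (.C 1) = y T (.C 1)
    have h1 : (1:ℝ) ≤ encCfg i C₁ C₂ (.C 1) := by
      have h2 : (1 : ℕ) ≤ C₂ := h0
      simp only [encCfg]
      norm_num
      exact_mod_cast h2
    have := hCgenpos 1 h1 s hs.1.le hs.2.le
    linarith
  · intro k hk s hs
    show y s (.A k) = y T (.A k)
    by_cases hk4 : k = 4
    · subst hk4
      have := hA4 s hs.1.le hs.2.le
      linarith
    · have := hApass k hk hk4 s hs.1.le hs.2.le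
      linarith
  · intro j hj s hs
    show y s (.B j) = y T (.B j)
    have := hBj j hj s hs.1.le hs.2.le
    linarith
  · intro k s hs
    show y s (.D k) = y T (.D k)
    have := hD0 k s hs.1.le hs.2.le
    linarith
  · intro i' b c s hs
    show y s (.E i' b c) = y T (.E i' b c)
    have := hE0 i' b c s hs.1.le hs.2.le
    linarith
  · intro i' b c s hs
    show y s (.F i' b c) = y T (.F i' b c)
    have := hF0 i' b c s hs.1.le hs.2.le
    linarith
end

section
/- Let Γ be a consistent counter machine with m states, let (y,z) be a Skorokhod solution of the associated problem with z(0) = z^{i⁰,C⁰₁,C⁰₂}, let t ∈ ℕ, and suppose z(5t) = z^{i,C₁,C₂} where (i,C₁,C₂) is the configuration of the trajectory at time t. Let (i′,Δ₁,Δ₂) = Γ(i, 1{C₁>0}, 1{C₂>0}), b* = min(C₁,1), c* = min(C₂,1), and Υ(i″,b,c) = −b−c+(2b−1)·1{C₁=0}+(2c−1)·1{C₂=0}−1{i″=i}. Then on the interval (5t+3, 5t+4): y_{A,4} is active at unit rate; each coordinate y_{F,(i″,b,c)} is passive on (5t+3, 5t+3+q) and active at rate 4 on (5t+3+q, 5t+4),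 where q = (3 + Υ(i″,b,c) + 1{(i″,b,c)=(i,b*,c*)})/4; all remaining y-coordinates are passive. Moreover z(5t+4) is given by: z_A(5t+4) = (1,1,1,0,0); z_{B,i′}(5t+4) = 0 and z_{B,j}(5t+4) = 1 for j ≠ i′; z_{C,k}(5t+4) = C_k + Δ_k for k = 1,2; z_D(5t+4) = (0,0); z_E(5t+4) ≡ 3; z_F(5t+4) ≡ 0. -/
open scoped BigOperators

namespace CMAux

open Set Finset

variable {m : ℕ}

/-- Sum index type. -/
abbrev idxT (m : ℕ) :=
  Fin 5 ⊕ Fin m ⊕ Fin 2 ⊕ Fin 2 ⊕ (Fin m × Bool × Bool) ⊕ (Fin m × Bool × Bool)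

def toIdx : idxT m → Idx m
  | .inl k => .A k
  | .inr (.inl j) => .B j
  | .inr (.inr (.inl k)) => .C k
  | .inr (.inr (.inr (.inl k))) => .D k
  | .inr (.inr (.inr (.inr (.inl x)))) => .E x.1 x.2.1 x.2.2
  | .inr (.inr (.inr (.inr (.inr x)))) => .F x.1 x.2.1 x.2.2

def fromIdx : Idx m → idxT m
  | .A k => .inl k
  | .B j => .inr (.inl j)
  | .C k => .inr (.inr (.inl k))
  | .D k => .inr (.inr (.inr (.inl k)))
  | .E i b c => .inr (.inr (.inr (.inr (.inl (i, b, c)))))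
  | .F i b c => .inr (.inr (.inr (.inr (.inr (i, b, c)))))

def idxEquiv (m : ℕ) : idxT m ≃ Idx m where
  toFun := toIdx
  invFun := fromIdx
  left_inv x := by rcases x with k | j | k | k | ⟨i, b, c⟩ | ⟨i, b, c⟩ <;> rfl
  right_inv p := by cases p <;> rfl

lemma sum_idx (f : Idx m → ℝ) :
    ∑ p, f p = (∑ k, f (.A k)) + (∑ j, f (.B j)) + (∑ k, f (.C k)) + (∑ k, f (.D k))
      + (∑ x : Fin m × Bool × Bool, f (.E x.1 x.2.1 x.2.2))
      + (∑ x : Fin m × Bool × Bool, f (.F x.1 x.2.1 x.2.2)) := by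
  rw [← Equiv.sum_comp (idxEquiv m) f]
  simp [idxEquiv, Fintype.sum_sum_type, toIdx, add_assoc]

lemma mv {M : CounterMachine m} (w : Idx m → ℝ) (p : Idx m) :
    (Rmat M).mulVec w p = ∑ q, Rmat M p q * w q := by
  simp [Matrix.mulVec, dotProduct]

lemma diagsum {n : Type*} [Fintype n] [DecidableEq n] (j : n) (r : ℝ) (w : n → ℝ) :
    ∑ j', (if j' = j then r else 0) * w j' = r * w j := by
  simp [ite_mul]

lemma diagsumE (i : Fin m) (b c : Bool) (w : Fin m × Bool × Bool → ℝ) :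
    ∑ x : Fin m × Bool × Bool,
      (if x.1 = i ∧ x.2.1 = b ∧ x.2.2 = c then (1:ℝ) else 0) * w x = w (i, b, c) := by
  have h : ∀ x : Fin m × Bool × Bool,
      (x.1 = i ∧ x.2.1 = b ∧ x.2.2 = c) ↔ x = (i, b, c) := by
    intro x; rw [Prod.ext_iff, Prod.ext_iff]
  simp_rw [h]
  simp [ite_mul]

lemma mvA0 {M : CounterMachine m} (w : Idx m → ℝ) :
    (Rmat M).mulVec w (.A 0) = w (.A 0) + 2 * w (.A 1) + w (.A 2) + w (.A 3) := by
  rw [mv, sum_idx]; simp only [Rmat]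
  rw [Fin.sum_univ_five]
  norm_num [show AAmat 0 0 = 1 from rfl, show AAmat 0 1 = 2 from rfl,
    show AAmat 0 2 = 1 from rfl, show AAmat 0 3 = 1 from rfl, show AAmat 0 4 = 0 from rfl]

lemma mvA1 {M : CounterMachine m} (w : Idx m → ℝ) :
    (Rmat M).mulVec w (.A 1) = w (.A 1) + 2 * w (.A 2) + w (.A 3) + w (.A 4) := by
  rw [mv, sum_idx]; simp only [Rmat]
  rw [Fin.sum_univ_five]
  norm_num [show AAmat 1 0 = 0 from rfl, show AAmat 1 1 = 1 from rfl,
    show AAmat 1 2 = 2 from rfl, show AAmat 1 3 = 1 from rfl, show AAmat 1 4 = 1 from rfl]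

lemma mvA2 {M : CounterMachine m} (w : Idx m → ℝ) :
    (Rmat M).mulVec w (.A 2) = w (.A 0) + w (.A 2) + 2 * w (.A 3) + w (.A 4) := by
  rw [mv, sum_idx]; simp only [Rmat]
  rw [Fin.sum_univ_five]
  norm_num [show AAmat 2 0 = 1 from rfl, show AAmat 2 1 = 0 from rfl,
    show AAmat 2 2 = 1 from rfl, show AAmat 2 3 = 2 from rfl, show AAmat 2 4 = 1 from rfl]

lemma mvA3 {M : CounterMachine m} (w : Idx m → ℝ) :
    (Rmat M).mulVec w (.A 3) = w (.A 0) + w (.A 1) + w (.A 3) + 2 * w (.A 4) := by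
  rw [mv, sum_idx]; simp only [Rmat]
  rw [Fin.sum_univ_five]
  norm_num [show AAmat 3 0 = 1 from rfl, show AAmat 3 1 = 1 from rfl,
    show AAmat 3 2 = 0 from rfl, show AAmat 3 3 = 1 from rfl, show AAmat 3 4 = 2 from rfl]

lemma mvA4 {M : CounterMachine m} (w : Idx m → ℝ) :
    (Rmat M).mulVec w (.A 4) = 2 * w (.A 0) + w (.A 1) + w (.A 2) + w (.A 4) := by
  rw [mv, sum_idx]; simp only [Rmat]
  rw [Fin.sum_univ_five]
  norm_num [show AAmat 4 0 = 2 from rfl, show AAmat 4 1 = 1 from rfl,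
    show AAmat 4 2 = 1 from rfl, show AAmat 4 3 = 0 from rfl, show AAmat 4 4 = 1 from rfl]

lemma mvB {M : CounterMachine m} (w : Idx m → ℝ) (j : Fin m) :
    (Rmat M).mulVec w (.B j) = -w (.A 0) + w (.B j) +
      ∑ x : Fin m × Bool × Bool,
        (if (M.Γ x.1 x.2.1 x.2.2).1 = j then 0 else 1) * w (.E x.1 x.2.1 x.2.2) := by
  rw [mv, sum_idx]; simp only [Rmat]
  rw [Fin.sum_univ_five, diagsum j 1]
  simp

/-- coefficient of the CE block -/
def dlt (M : CounterMachine m) (k : Fin 2) (x : Fin m × Bool × Bool) : ℝ :=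
  if k = 0 then ((M.Γ x.1 x.2.1 x.2.2).2.1 : ℝ) else ((M.Γ x.1 x.2.1 x.2.2).2.2 : ℝ)

lemma mvC {M : CounterMachine m} (w : Idx m → ℝ) (k : Fin 2) :
    (Rmat M).mulVec w (.C k) = -w (.A 0) - w (.A 3) + w (.C k) + w (.D k) +
      ∑ x : Fin m × Bool × Bool, (dlt M k x + 1) * w (.E x.1 x.2.1 x.2.2) := by
  rw [mv, sum_idx]; simp only [Rmat]
  rw [Fin.sum_univ_five, diagsum k 1, diagsum k 1]
  simp [dlt]
  try ring

lemma mvD {M : CounterMachine m} (w : Idx m → ℝ) (k : Fin 2) :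
    (Rmat M).mulVec w (.D k) = -w (.A 1) + w (.C k) + w (.D k) := by
  rw [mv, sum_idx]; simp only [Rmat]
  rw [Fin.sum_univ_five, diagsum k 1, diagsum k 1]
  simp

lemma mvE {M : CounterMachine m} (w : Idx m → ℝ) (i : Fin m) (b c : Bool) :
    (Rmat M).mulVec w (.E i b c) = -(bnum b + bnum c) * w (.A 0) - w (.A 2) - w (.B i)
      + (2 * bnum b - 1) * w (.C 0) + (2 * bnum c - 1) * w (.C 1)
      + w (.E i b c) + w (.F i b c) := by
  rw [mv, sum_idx]; simp only [Rmat]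
  rw [Fin.sum_univ_five, Fin.sum_univ_two, diagsum i (-1),
    diagsumE i b c (fun x => w (.E x.1 x.2.1 x.2.2)), diagsumE i b c (fun x => w (.F x.1 x.2.1 x.2.2))]
  simp
  ring

lemma mvF {M : CounterMachine m} (w : Idx m → ℝ) (i : Fin m) (b c : Bool) :
    (Rmat M).mulVec w (.F i b c) = -(bnum b + bnum c) * w (.A 0) - w (.A 2)
      - 4 * w (.A 3) + 4 * w (.A 4) - w (.B i)
      + (2 * bnum b - 1) * w (.C 0) + (2 * bnum c - 1) * w (.C 1)
      + w (.E i b c) + w (.F i b c) := by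
  rw [mv, sum_idx]; simp only [Rmat]
  rw [Fin.sum_univ_five, Fin.sum_univ_two, diagsum i (-1),
    diagsumE i b c (fun x => w (.E x.1 x.2.1 x.2.2)), diagsumE i b c (fun x => w (.F x.1 x.2.1 x.2.2))]
  simp
  ring

end CMAux
namespace CMAux
open Set

variable {m : ℕ} {M : CounterMachine m} {i0 : Fin m} {C₁0 C₂0 : ℕ}
variable {y z : ℝ → Idx m → ℝ}

section push
variable {n : Type*} [Fintype n] {R : Matrix n n ℝ} {x : ℝ → n → ℝ} {y z : ℝ → n → ℝ}

lemma ydiff_nonneg (h : IsSkorokhodSolution R x y z) {a s : ℝ} (ha : 0 ≤ a) (has : a ≤ s)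
    (j : n) : 0 ≤ y s j - y a j := by
  have := h.2.2.2.2.2.1 j (mem_Ici.2 ha) (mem_Ici.2 (ha.trans has)) has
  linarith

lemma push_le (h : IsSkorokhodSolution R x y z) (j : n) {a b c : ℝ}
    (ha : 0 ≤ a) (hc : 0 ≤ c)
    (hz : ∀ s ∈ Icc a b, y s j - y a j - c * (s - a) ≤ z s j) :
    ∀ s ∈ Icc a b, y s j - y a j ≤ c * (s - a) := by
  obtain ⟨hy, -, -, -, -, -, hcompl⟩ := h
  intro s0 hs0
  by_contra hgt
  push_neg at hgt
  set g : ℝ → ℝ := fun s => y s j - y a j - c * (s - a) with hgdef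
  have has0 : a ≤ s0 := hs0.1
  have hyj : ContinuousOn (fun s => y s j) (Icc a s0) := by
    exact ((continuous_apply j).comp_continuousOn hy).mono
      (fun x hx => mem_Ici.2 (ha.trans hx.1))
  have hgc : ContinuousOn g (Icc a s0) := by
    apply (hyj.sub continuousOn_const).sub
    exact (continuous_const.mul (continuous_id.sub continuous_const)).continuousOn
  set A : Set ℝ := Icc a s0 ∩ g ⁻¹' Iic 0 with hAdef
  have hAclosed : IsClosed A := hgc.preimage_isClosed_of_isClosed isClosed_Icc isClosed_Iic
  have hAcompact : IsCompact A :=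
    IsCompact.of_isClosed_subset isCompact_Icc hAclosed inter_subset_left
  have haA : a ∈ A := by
    constructor
    · exact ⟨le_refl a, has0⟩
    · simp [hgdef]
  obtain ⟨a', ha'A⟩ : ∃ a', a' ∈ A ∧ a' = sSup A := by
    refine ⟨sSup A, hAcompact.sSup_mem ⟨a, haA⟩, rfl⟩
  obtain ⟨ha'mem, ha'sup⟩ := ha'A
  have hga' : g a' ≤ 0 := ha'mem.2
  have hgs0 : 0 < g s0 := by simp only [hgdef]; linarith
  have ha's0 : a' < s0 := by
    rcases lt_or_eq_of_le ha'mem.1.2 with h | h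
    · exact h
    · exfalso; rw [h] at hga'; linarith
  have hpos : ∀ s ∈ Ioo a' s0, 0 < z s j := by
    intro s hs
    have hsIcc : s ∈ Icc a s0 := ⟨ha'mem.1.1.trans hs.1.le, hs.2.le⟩
    have hsA : s ∉ A := by
      intro hmem
      have : s ≤ a' := by
        rw [ha'sup]
        exact le_csSup ⟨s0, fun x hx => hx.1.2⟩ hmem
      linarith [hs.1]
    have hgs : 0 < g s := by
      by_contra hle
      push_neg at hle
      exact hsA ⟨hsIcc, hle⟩
    have := hz s ⟨hsIcc.1, hsIcc.2.trans hs0.2⟩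
    simp only [hgdef] at hgs
    linarith
  have heq := hcompl j a' s0 (ha.trans ha'mem.1.1) ha's0.le hpos
  have h1 : y a' j - y a j ≤ c * (a' - a) := by simp only [hgdef] at hga'; linarith
  have h2 : c * (a' - a) ≤ c * (s0 - a) := by
    apply mul_le_mul_of_nonneg_left _ hc
    linarith
  rw [heq] at hgt
  linarith

lemma passive_of_le (h : IsSkorokhodSolution R x y z) (j : n) {a b : ℝ}
    (ha : 0 ≤ a)
    (hz : ∀ s ∈ Icc a b, y s j - y a j ≤ z s j) :
    ∀ s ∈ Icc a b, y s j - y a j = 0 := by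
  intro s hs
  have h1 := push_le h j ha (le_refl 0) (fun s hs => by
    have := hz s hs; linarith) s hs
  have h2 := ydiff_nonneg h ha hs.1 j
  linarith

lemma push_exact (h : IsSkorokhodSolution R x y z) (j : n) {a b c : ℝ}
    (ha : 0 ≤ a) (hc : 0 ≤ c)
    (hz : ∀ s ∈ Icc a b, z s j = y s j - y a j - c * (s - a)) :
    ∀ s ∈ Icc a b, y s j - y a j = c * (s - a) := by
  intro s hs
  have h1 := push_le h j ha hc (fun s hs => le_of_eq (hz s hs).symm) s hs
  have h2 := h.2.2.2.1 s (ha.trans hs.1) j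
  rw [hz s hs] at h2
  linarith

end push

lemma zdiff (h : IsSkorokhodSolution (Rmat M) (fluidX i0 C₁0 C₂0) y z)
    {a s : ℝ} (ha : 0 ≤ a) (hs : 0 ≤ s) (p : Idx m) :
    z s p = z a p + thetaVec m p * (s - a)
      + (Rmat M).mulVec (fun q => y s q - y a q) p := by
  have h1 := congrFun (h.2.2.1 s hs) p
  have h2 := congrFun (h.2.2.1 a ha) p
  have h3 : (Rmat M).mulVec (fun q => y s q - y a q) p
      = (Rmat M).mulVec (y s) p - (Rmat M).mulVec (y a) p := by
    simp [Matrix.mulVec, dotProduct, mul_sub, Finset.sum_sub_distrib]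
  rw [h3, h1, h2]
  simp only [Pi.add_apply, fluidX]
  ring

end CMAux
namespace CMAux
open Set

variable {m : ℕ}

lemma bnum_nonneg (b : Bool) : 0 ≤ bnum b := by cases b <;> simp [bnum]
lemma bnum_le_one (b : Bool) : bnum b ≤ 1 := by cases b <;> simp [bnum]

lemma indC_nonneg (P : Prop) [Decidable P] : 0 ≤ indC P := by
  by_cases h : P <;> simp [indC, h]
lemma indC_le_one (P : Prop) [Decidable P] : indC P ≤ 1 := by
  by_cases h : P <;> simp [indC, h]

lemma slot_bound (b : Bool) {u σ : ℝ} (h0 : 0 ≤ u) (h1 : u ≤ σ) :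
    -σ ≤ -(bnum b) * σ + (2 * bnum b - 1) * u := by
  cases b <;> simp [bnum] <;> linarith

lemma ups_eq {i i'' : Fin m} {C₁ C₂ : ℕ} {b c bstar cstar : Bool}
    (hb : bstar = decide (0 < C₁)) (hc : cstar = decide (0 < C₂)) :
    Upsilon i C₁ C₂ i'' b c
      = -(indC (b = bstar)) - indC (c = cstar) - indC (i'' = i) := by
  subst hb hc
  rcases Nat.eq_zero_or_pos C₁ with h1 | h1 <;> rcases Nat.eq_zero_or_pos C₂ with h2 | h2 <;>
    cases b <;> cases c <;>
    simp [Upsilon, indC, bnum, h1, h2] <;>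
    (first | omega | (split_ifs <;> (first | (exfalso; omega) | norm_num)) | norm_num)

lemma indstar_eq {i i'' : Fin m} {b c bstar cstar : Bool} :
    indC ((i'', b, c) = (i, bstar, cstar))
      = indC (i'' = i) * indC (b = bstar) * indC (c = cstar) := by
  by_cases h1 : i'' = i <;> by_cases h2 : b = bstar <;> by_cases h3 : c = cstar <;>
    simp [indC, Prod.ext_iff, h1, h2, h3]

section upsfacts
variable {i i'' : Fin m} {C₁ C₂ : ℕ} {b c bstar cstar : Bool}
  (hb : bstar = decide (0 < C₁)) (hc : cstar = decide (0 < C₂))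

include hb hc

lemma ups_add3_nonneg : 0 ≤ 3 + Upsilon i C₁ C₂ i'' b c := by
  rw [ups_eq hb hc]
  by_cases h1 : i'' = i <;> by_cases h2 : b = bstar <;> by_cases h3 : c = cstar <;>
    simp [indC, h1, h2, h3] <;> norm_num

lemma ups_nonpos : Upsilon i C₁ C₂ i'' b c ≤ 0 := by
  rw [ups_eq hb hc]
  by_cases h1 : i'' = i <;> by_cases h2 : b = bstar <;> by_cases h3 : c = cstar <;>
    simp [indC, h1, h2, h3] <;> norm_num

lemma ups_W_ge_one :
    1 ≤ 3 + Upsilon i C₁ C₂ i'' b c + indC ((i'', b, c) = (i, bstar, cstar)) := by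
  rw [ups_eq hb hc, indstar_eq]
  by_cases h1 : i'' = i <;> by_cases h2 : b = bstar <;> by_cases h3 : c = cstar <;>
    simp [indC, h1, h2, h3] <;> norm_num

lemma ups_W_le_three :
    3 + Upsilon i C₁ C₂ i'' b c + indC ((i'', b, c) = (i, bstar, cstar)) ≤ 3 := by
  rw [ups_eq hb hc, indstar_eq]
  by_cases h1 : i'' = i <;> by_cases h2 : b = bstar <;> by_cases h3 : c = cstar <;>
    simp [indC, h1, h2, h3] <;> norm_num

lemma ups_Wm1_nonneg :
    0 ≤ 2 + Upsilon i C₁ C₂ i'' b c + indC ((i'', b, c) = (i, bstar, cstar)) := by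
  rw [ups_eq hb hc, indstar_eq]
  by_cases h1 : i'' = i <;> by_cases h2 : b = bstar <;> by_cases h3 : c = cstar <;>
    simp [indC, h1, h2, h3] <;> norm_num

lemma ups_star : Upsilon i C₁ C₂ i bstar cstar = -3 := by
  rw [ups_eq hb hc]
  simp [indC]
  norm_num

lemma ups_nonstar (hne : ¬ ((i'', b, c) = (i, bstar, cstar))) :
    1 ≤ 3 + Upsilon i C₁ C₂ i'' b c := by
  rw [ups_eq hb hc]
  simp only [Prod.mk.injEq, not_and] at hne
  by_cases h1 : i'' = i <;> by_cases h2 : b = bstar <;> by_cases h3 : c = cstar <;>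
    simp [indC, h1, h2, h3] <;> norm_num
  exact absurd h3 (hne h1 h2)

end upsfacts

lemma dlt_mem {M : CounterMachine m} (k : Fin 2) (x : Fin m × Bool × Bool) :
    -1 ≤ dlt M k x ∧ dlt M k x ≤ 1 := by
  have hmv := M.moves x.1 x.2.1 x.2.2
  simp only [Set.mem_insert_iff, Set.mem_singleton_iff, Prod.mk.injEq] at hmv
  unfold dlt
  rcases hmv with ⟨h1, h2⟩ | ⟨h1, h2⟩ | ⟨h1, h2⟩ | ⟨h1, h2⟩ | ⟨h1, h2⟩ <;>
    rw [h1, h2] <;> by_cases hk : k = 0 <;> simp [hk] <;> norm_num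

lemma dlt_plus_one_nonneg {M : CounterMachine m} (k : Fin 2) (x : Fin m × Bool × Bool) :
    0 ≤ dlt M k x + 1 := by linarith [(dlt_mem (M := M) k x).1]

end CMAux
namespace CMAux
open Set Finset

variable {m : ℕ}

/-- State profile at time T+1. -/
def Z1 (i : Fin m) (C₁ C₂ : ℕ) : Idx m → ℝ := fun p =>
  match p with
  | .A k => if k = 0 ∨ k = 1 then 0 else 1
  | .B _ => 0
  | .C k => if k = 0 then (if C₁ = 0 then 0 else (C₁:ℝ) - 1)
      else (if C₂ = 0 then 0 else (C₂:ℝ) - 1)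
  | .D k => if k = 0 then (if C₁ = 0 then 1 else 0) else (if C₂ = 0 then 1 else 0)
  | .E i'' b c => 3 + Upsilon i C₁ C₂ i'' b c
  | .F i'' b c => 4 + Upsilon i C₁ C₂ i'' b c

/-- State profile at time T+2. -/
def Z2 (i : Fin m) (C₁ C₂ : ℕ) : Idx m → ℝ := fun p =>
  match p with
  | .A k => if k = 1 ∨ k = 2 then 0 else 1
  | .B _ => 0
  | .C k => if k = 0 then (C₁:ℝ) else (C₂:ℝ)
  | .D _ => 0
  | .E i'' b c => 3 + Upsilon i C₁ C₂ i'' b c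
  | .F i'' b c => 4 + Upsilon i C₁ C₂ i'' b c

/-- State profile at time T+3. -/
def Z3 (M : CounterMachine m) (i : Fin m) (C₁ C₂ : ℕ) (bstar cstar : Bool) :
    Idx m → ℝ := fun p =>
  match p with
  | .A k => if k = 2 ∨ k = 3 then 0 else 1
  | .B j => if (M.Γ i bstar cstar).1 = j then 0 else 1
  | .C k => (if k = 0 then (C₁:ℝ) + ((M.Γ i bstar cstar).2.1 : ℝ)
      else (C₂:ℝ) + ((M.Γ i bstar cstar).2.2 : ℝ)) + 1
  | .D _ => 0
  | .E i'' b c => 2 + Upsilon i C₁ C₂ i'' b c + indC ((i'', b, c) = (i, bstar, cstar))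
  | .F i'' b c => 3 + Upsilon i C₁ C₂ i'' b c + indC ((i'', b, c) = (i, bstar, cstar))

/-- State profile at time T+4. -/
def Z4 (M : CounterMachine m) (i : Fin m) (C₁ C₂ : ℕ) (bstar cstar : Bool) :
    Idx m → ℝ := fun p =>
  match p with
  | .A k => if k = 3 ∨ k = 4 then 0 else 1
  | .B j => if (M.Γ i bstar cstar).1 = j then 0 else 1
  | .C k => if k = 0 then (C₁:ℝ) + ((M.Γ i bstar cstar).2.1 : ℝ)
      else (C₂:ℝ) + ((M.Γ i bstar cstar).2.2 : ℝ)
  | .D _ => 0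
  | .E _ _ _ => 3
  | .F _ _ _ => 0

lemma sumE_nonneg (co w : Fin m × Bool × Bool → ℝ) (hco : ∀ x, 0 ≤ co x)
    (hw : ∀ x, 0 ≤ w x) : 0 ≤ ∑ x, co x * w x :=
  Finset.sum_nonneg fun x _ => mul_nonneg (hco x) (hw x)

lemma sumE_zero (co w : Fin m × Bool × Bool → ℝ) (hw : ∀ x, w x = 0) :
    ∑ x, co x * w x = 0 :=
  Finset.sum_eq_zero fun x _ => by rw [hw x, mul_zero]

lemma sumE_single (co w : Fin m × Bool × Bool → ℝ) (x0 : Fin m × Bool × Bool) (r : ℝ)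
    (hw : ∀ x, w x = if x = x0 then r else 0) :
    ∑ x, co x * w x = co x0 * r := by
  rw [Finset.sum_eq_single x0]
  · rw [hw x0]; simp
  · intro x _ hx; rw [hw x, if_neg hx, mul_zero]
  · intro hx; exact absurd (Finset.mem_univ x0) hx

end CMAux
namespace CMAux
open Set Finset

variable {m : ℕ} {M : CounterMachine m} {i0 : Fin m} {C₁0 C₂0 : ℕ}
  {y z : ℝ → Idx m → ℝ}

set_option maxHeartbeats 1000000 in
lemma int0 (h : IsSkorokhodSolution (Rmat M) (fluidX i0 C₁0 C₂0) y z)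
    (i : Fin m) (C₁ C₂ : ℕ) {a : ℝ} (ha : 0 ≤ a)
    (hz0 : ∀ p, z a p = encCfg i C₁ C₂ p) :
    ∀ p, z (a + 1) p = Z1 i C₁ C₂ p := by
  have hzs : ∀ s ∈ Icc a (a+1), ∀ p, z s p = encCfg i C₁ C₂ p
      + thetaVec m p * (s - a) + (Rmat M).mulVec (fun q => y s q - y a q) p := by
    intro s hs p
    rw [zdiff h ha (by linarith [hs.1] : (0:ℝ) ≤ s) p, hz0 p]
  have un : ∀ s ∈ Icc a (a+1), ∀ q, 0 ≤ y s q - y a q :=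
    fun s hs q => ydiff_nonneg h ha hs.1 q
  -- A1, A2, A3 passive
  have hA1 : ∀ s ∈ Icc a (a+1), y s (.A 1) - y a (.A 1) = 0 := by
    apply passive_of_le h _ ha
    intro s hs
    rw [hzs s hs (.A 1)]; simp only [mvA1]
    have h1 := un s hs (.A 2); have h2 := un s hs (.A 3); have h3 := un s hs (.A 4)
    simp [encCfg, thetaVec]
    linarith [hs.2]
  have hA2 : ∀ s ∈ Icc a (a+1), y s (.A 2) - y a (.A 2) = 0 := by
    apply passive_of_le h _ ha
    intro s hs
    rw [hzs s hs (.A 2)]; simp only [mvA2]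
    have h1 := un s hs (.A 0); have h2 := un s hs (.A 3); have h3 := un s hs (.A 4)
    simp [encCfg, thetaVec]
    linarith [hs.2]
  have hA3 : ∀ s ∈ Icc a (a+1), y s (.A 3) - y a (.A 3) = 0 := by
    apply passive_of_le h _ ha
    intro s hs
    rw [hzs s hs (.A 3)]; simp only [mvA3]
    have h1 := un s hs (.A 0); have h2 := un s hs (.A 1); have h3 := un s hs (.A 4)
    simp [encCfg, thetaVec]
    linarith [hs.2]
  -- A0 pushes at unit rate
  have hA0 : ∀ s ∈ Icc a (a+1), y s (.A 0) - y a (.A 0) = 1 * (s - a) := by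
    apply push_exact h _ ha zero_le_one
    intro s hs
    rw [hzs s hs (.A 0)]; simp only [mvA0]
    rw [hA1 s hs, hA2 s hs, hA3 s hs]
    simp [encCfg, thetaVec]
    ring
  -- A4 passive
  have hA4 : ∀ s ∈ Icc a (a+1), y s (.A 4) - y a (.A 4) = 0 := by
    apply passive_of_le h _ ha
    intro s hs
    rw [hzs s hs (.A 4)]; simp only [mvA4]
    rw [hA0 s hs, hA1 s hs, hA2 s hs]
    simp [encCfg, thetaVec]
    linarith [hs.1]
  -- D passive
  have hD : ∀ k, ∀ s ∈ Icc a (a+1), y s (.D k) - y a (.D k) = 0 := by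
    intro k
    apply passive_of_le h _ ha
    intro s hs
    rw [hzs s hs (.D k)]; simp only [mvD]
    rw [hA1 s hs]
    have h1 := un s hs (.C k)
    simp [encCfg, thetaVec]
    linarith
  -- B bounded by slope 1
  have hBle : ∀ j, ∀ s ∈ Icc a (a+1), y s (.B j) - y a (.B j) ≤ s - a := by
    intro j
    have := push_le h (.B j) ha zero_le_one (b := a + 1) ?_
    · intro s hs; have := this s hs; linarith [this]
    · intro s hs
      rw [hzs s hs (.B j)]; simp only [mvB]
      rw [hA0 s hs]
      have hS : 0 ≤ ∑ x : Fin m × Bool × Bool,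
          (if (M.Γ x.1 x.2.1 x.2.2).1 = j then 0 else 1)
            * (y s (.E x.1 x.2.1 x.2.2) - y a (.E x.1 x.2.1 x.2.2)) := by
        apply sumE_nonneg
        · intro x; by_cases hx : (M.Γ x.1 x.2.1 x.2.2).1 = j <;> simp [hx]
        · intro x; exact un s hs _
      have henc : (0:ℝ) ≤ encCfg i C₁ C₂ (.B j) := by
        by_cases hj : j = i <;> simp [encCfg, hj]
      simp only [thetaVec]
      linarith
  -- B passive off i
  have hBne : ∀ j, j ≠ i → ∀ s ∈ Icc a (a+1), y s (.B j) - y a (.B j) = 0 := by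
    intro j hj
    apply passive_of_le h _ ha
    intro s hs
    rw [hzs s hs (.B j)]; simp only [mvB]
    rw [hA0 s hs]
    have hS : 0 ≤ ∑ x : Fin m × Bool × Bool,
        (if (M.Γ x.1 x.2.1 x.2.2).1 = j then 0 else 1)
          * (y s (.E x.1 x.2.1 x.2.2) - y a (.E x.1 x.2.1 x.2.2)) := by
      apply sumE_nonneg
      · intro x; by_cases hx : (M.Γ x.1 x.2.1 x.2.2).1 = j <;> simp [hx]
      · intro x; exact un s hs _
    have henc : encCfg i C₁ C₂ (.B j) = 1 := by simp [encCfg, hj]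
    rw [henc]; simp only [thetaVec]
    linarith [hs.2]
  -- C bounded by slope 1
  have hCle : ∀ k, ∀ s ∈ Icc a (a+1), y s (.C k) - y a (.C k) ≤ s - a := by
    intro k
    have := push_le h (.C k) ha zero_le_one (b := a + 1) ?_
    · intro s hs; have := this s hs; linarith [this]
    · intro s hs
      rw [hzs s hs (.C k)]; simp only [mvC]
      rw [hA0 s hs, hA3 s hs]
      have hS : 0 ≤ ∑ x : Fin m × Bool × Bool,
          (dlt M k x + 1) * (y s (.E x.1 x.2.1 x.2.2) - y a (.E x.1 x.2.1 x.2.2)) :=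
        sumE_nonneg _ _ (fun x => dlt_plus_one_nonneg k x) (fun x => un s hs _)
      have h1 := un s hs (.D k)
      have henc : (0:ℝ) ≤ encCfg i C₁ C₂ (.C k) := by
        by_cases hk : k = 0 <;> simp [encCfg, hk]
      simp only [thetaVec]
      linarith
  -- E passive
  have hE : ∀ (i'' : Fin m) (b c : Bool), ∀ s ∈ Icc a (a+1),
      y s (.E i'' b c) - y a (.E i'' b c) = 0 := by
    intro i'' b c
    apply passive_of_le h _ ha
    intro s hs
    rw [hzs s hs (.E i'' b c)]; simp only [mvE]
    rw [hA0 s hs, hA2 s hs]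
    have h1 := un s hs (.C 0); have h2 := un s hs (.C 1)
    have h3 := hCle 0 s hs; have h4 := hCle 1 s hs
    have h5 := hBle i'' s hs
    have h6 := un s hs (.B i'')
    have h7 := un s hs (.F i'' b c)
    have h8 := hs.1; have h9 := hs.2
    cases b <;> cases c <;> simp [encCfg, thetaVec, bnum] <;> linarith
  -- F passive
  have hF : ∀ (i'' : Fin m) (b c : Bool), ∀ s ∈ Icc a (a+1),
      y s (.F i'' b c) - y a (.F i'' b c) = 0 := by
    intro i'' b c
    apply passive_of_le h _ ha
    intro s hs
    rw [hzs s hs (.F i'' b c)]; simp only [mvF]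
    rw [hA0 s hs, hA2 s hs, hA3 s hs, hA4 s hs]
    have h1 := un s hs (.C 0); have h2 := un s hs (.C 1)
    have h3 := hCle 0 s hs; have h4 := hCle 1 s hs
    have h5 := hBle i'' s hs
    have h6 := un s hs (.B i'')
    have h7 := un s hs (.E i'' b c)
    have h8 := hs.1; have h9 := hs.2
    cases b <;> cases c <;> simp [encCfg, thetaVec, bnum] <;> linarith
  -- B i pushes at unit rate
  have hBi : ∀ s ∈ Icc a (a+1), y s (.B i) - y a (.B i) = 1 * (s - a) := by
    apply push_exact h _ ha zero_le_one
    intro s hs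
    rw [hzs s hs (.B i)]; simp only [mvB]
    rw [hA0 s hs]
    rw [sumE_zero _ _ (fun x => hE x.1 x.2.1 x.2.2 s hs)]
    simp [encCfg, thetaVec]
    ring
  -- combined B values
  have hBval : ∀ j, ∀ s ∈ Icc a (a+1),
      y s (.B j) - y a (.B j) = if j = i then s - a else 0 := by
    intro j s hs
    by_cases hj : j = i
    · subst hj; rw [hBi s hs]; simp
    · rw [hBne j hj s hs]; simp [hj]
  -- C values
  have hC0 : ∀ s ∈ Icc a (a+1),
      y s (.C 0) - y a (.C 0) = if C₁ = 0 then s - a else 0 := by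
    by_cases hC : C₁ = 0
    · intro s hs
      rw [if_pos hC]
      have := push_exact h (.C 0) ha zero_le_one (b := a+1) ?_ s hs
      · linarith [this]
      · intro s' hs'
        rw [hzs s' hs' (.C 0)]; simp only [mvC]
        rw [hA0 s' hs', hA3 s' hs', hD 0 s' hs']
        rw [sumE_zero _ _ (fun x => hE x.1 x.2.1 x.2.2 s' hs')]
        simp [encCfg, thetaVec, hC]
        ring
    · intro s hs
      rw [if_neg hC]
      apply passive_of_le h _ ha _ s hs
      intro s' hs'
      rw [hzs s' hs' (.C 0)]; simp only [mvC]
      rw [hA0 s' hs', hA3 s' hs', hD 0 s' hs']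
      rw [sumE_zero _ _ (fun x => hE x.1 x.2.1 x.2.2 s' hs')]
      have hge : (1:ℝ) ≤ (C₁ : ℝ) := by exact_mod_cast Nat.one_le_iff_ne_zero.2 hC
      simp [encCfg, thetaVec]
      linarith [hs'.2]
  have hC1 : ∀ s ∈ Icc a (a+1),
      y s (.C 1) - y a (.C 1) = if C₂ = 0 then s - a else 0 := by
    by_cases hC : C₂ = 0
    · intro s hs
      rw [if_pos hC]
      have := push_exact h (.C 1) ha zero_le_one (b := a+1) ?_ s hs
      · linarith [this]
      · intro s' hs'
        rw [hzs s' hs' (.C 1)]; simp only [mvC]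
        rw [hA0 s' hs', hA3 s' hs', hD 1 s' hs']
        rw [sumE_zero _ _ (fun x => hE x.1 x.2.1 x.2.2 s' hs')]
        simp [encCfg, thetaVec, hC]
        ring
    · intro s hs
      rw [if_neg hC]
      apply passive_of_le h _ ha _ s hs
      intro s' hs'
      rw [hzs s' hs' (.C 1)]; simp only [mvC]
      rw [hA0 s' hs', hA3 s' hs', hD 1 s' hs']
      rw [sumE_zero _ _ (fun x => hE x.1 x.2.1 x.2.2 s' hs')]
      have hge : (1:ℝ) ≤ (C₂ : ℝ) := by exact_mod_cast Nat.one_le_iff_ne_zero.2 hC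
      simp [encCfg, thetaVec]
      linarith [hs'.2]
  -- final values
  have hmem : a + 1 ∈ Icc a (a+1) := ⟨by linarith, le_refl _⟩
  have hone : a + 1 - a = 1 := by ring
  have vA0 : z (a+1) (.A 0) = Z1 i C₁ C₂ (.A 0) := by
    rw [hzs _ hmem (.A 0)]; simp only [mvA0]
    rw [hA0 _ hmem, hA1 _ hmem, hA2 _ hmem, hA3 _ hmem]
    simp [encCfg, thetaVec, Z1]
  have vA1 : z (a+1) (.A 1) = Z1 i C₁ C₂ (.A 1) := by
    rw [hzs _ hmem (.A 1)]; simp only [mvA1]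
    rw [hA1 _ hmem, hA2 _ hmem, hA3 _ hmem, hA4 _ hmem]
    simp [encCfg, thetaVec, Z1]
  have vA2 : z (a+1) (.A 2) = Z1 i C₁ C₂ (.A 2) := by
    rw [hzs _ hmem (.A 2)]; simp only [mvA2]
    rw [hA0 _ hmem, hA2 _ hmem, hA3 _ hmem, hA4 _ hmem]
    simp [encCfg, thetaVec, Z1]
  have vA3 : z (a+1) (.A 3) = Z1 i C₁ C₂ (.A 3) := by
    rw [hzs _ hmem (.A 3)]; simp only [mvA3]
    rw [hA0 _ hmem, hA1 _ hmem, hA3 _ hmem, hA4 _ hmem]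
    simp [encCfg, thetaVec, Z1]
  have vA4 : z (a+1) (.A 4) = Z1 i C₁ C₂ (.A 4) := by
    rw [hzs _ hmem (.A 4)]; simp only [mvA4]
    rw [hA0 _ hmem, hA1 _ hmem, hA2 _ hmem, hA4 _ hmem]
    simp [encCfg, thetaVec, Z1]
    ring
  have vB : ∀ j, z (a+1) (.B j) = Z1 i C₁ C₂ (.B j) := by
    intro j
    rw [hzs _ hmem (.B j)]; simp only [mvB]
    rw [hA0 _ hmem, hBval j _ hmem]
    rw [sumE_zero _ _ (fun x => hE x.1 x.2.1 x.2.2 _ hmem)]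
    by_cases hj : j = i <;> simp [encCfg, thetaVec, Z1, hj] <;> ring
  have vC0 : z (a+1) (.C 0) = Z1 i C₁ C₂ (.C 0) := by
    rw [hzs _ hmem (.C 0)]; simp only [mvC]
    rw [hA0 _ hmem, hA3 _ hmem, hD 0 _ hmem, hC0 _ hmem]
    rw [sumE_zero _ _ (fun x => hE x.1 x.2.1 x.2.2 _ hmem)]
    by_cases hC : C₁ = 0 <;> simp [encCfg, thetaVec, Z1, hC] <;> ring
  have vC1 : z (a+1) (.C 1) = Z1 i C₁ C₂ (.C 1) := by
    rw [hzs _ hmem (.C 1)]; simp only [mvC]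
    rw [hA0 _ hmem, hA3 _ hmem, hD 1 _ hmem, hC1 _ hmem]
    rw [sumE_zero _ _ (fun x => hE x.1 x.2.1 x.2.2 _ hmem)]
    by_cases hC : C₂ = 0 <;> simp [encCfg, thetaVec, Z1, hC] <;> ring
  have vD0 : z (a+1) (.D 0) = Z1 i C₁ C₂ (.D 0) := by
    rw [hzs _ hmem (.D 0)]; simp only [mvD]
    rw [hA1 _ hmem, hD 0 _ hmem, hC0 _ hmem]
    by_cases hC : C₁ = 0 <;> simp [encCfg, thetaVec, Z1, hC]
  have vD1 : z (a+1) (.D 1) = Z1 i C₁ C₂ (.D 1) := by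
    rw [hzs _ hmem (.D 1)]; simp only [mvD]
    rw [hA1 _ hmem, hD 1 _ hmem, hC1 _ hmem]
    by_cases hC : C₂ = 0 <;> simp [encCfg, thetaVec, Z1, hC]
  have vE : ∀ i'' b c, z (a+1) (.E i'' b c) = Z1 i C₁ C₂ (.E i'' b c) := by
    intro i'' b c
    rw [hzs _ hmem (.E i'' b c)]; simp only [mvE]
    rw [hA0 _ hmem, hA2 _ hmem, hBval i'' _ hmem, hC0 _ hmem, hC1 _ hmem,
      hE i'' b c _ hmem, hF i'' b c _ hmem]
    simp only [encCfg, thetaVec, Z1, Upsilon, indC, hone]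
    ring
  have vF : ∀ i'' b c, z (a+1) (.F i'' b c) = Z1 i C₁ C₂ (.F i'' b c) := by
    intro i'' b c
    rw [hzs _ hmem (.F i'' b c)]; simp only [mvF]
    rw [hA0 _ hmem, hA2 _ hmem, hA3 _ hmem, hA4 _ hmem, hBval i'' _ hmem,
      hC0 _ hmem, hC1 _ hmem, hE i'' b c _ hmem, hF i'' b c _ hmem]
    simp only [encCfg, thetaVec, Z1, Upsilon, indC, hone]
    ring
  intro p
  cases p with
  | A k =>
    fin_cases k
    · exact vA0
    · exact vA1
    · exact vA2
    · exact vA3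
    · exact vA4
  | B j => exact vB j
  | C k =>
    fin_cases k
    · exact vC0
    · exact vC1
  | D k =>
    fin_cases k
    · exact vD0
    · exact vD1
  | E i'' b c => exact vE i'' b c
  | F i'' b c => exact vF i'' b c

end CMAux
namespace CMAux
open Set Finset

variable {m : ℕ} {M : CounterMachine m} {i0 : Fin m} {C₁0 C₂0 : ℕ}
  {y z : ℝ → Idx m → ℝ}

set_option maxHeartbeats 1000000 in
lemma int1 (h : IsSkorokhodSolution (Rmat M) (fluidX i0 C₁0 C₂0) y z)
    (i : Fin m) (C₁ C₂ : ℕ) {bstar cstar : Bool}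
    (hb : bstar = decide (0 < C₁)) (hc : cstar = decide (0 < C₂))
    {a : ℝ} (ha : 0 ≤ a)
    (hz1 : ∀ p, z a p = Z1 i C₁ C₂ p) :
    ∀ p, z (a + 1) p = Z2 i C₁ C₂ p := by
  have hzs : ∀ s ∈ Icc a (a+1), ∀ p, z s p = Z1 i C₁ C₂ p
      + thetaVec m p * (s - a) + (Rmat M).mulVec (fun q => y s q - y a q) p := by
    intro s hs p
    rw [zdiff h ha (by linarith [hs.1] : (0:ℝ) ≤ s) p, hz1 p]
  have un : ∀ s ∈ Icc a (a+1), ∀ q, 0 ≤ y s q - y a q :=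
    fun s hs q => ydiff_nonneg h ha hs.1 q
  -- A2, A3, A4 passive
  have hA2 : ∀ s ∈ Icc a (a+1), y s (.A 2) - y a (.A 2) = 0 := by
    apply passive_of_le h _ ha
    intro s hs
    rw [hzs s hs (.A 2)]; simp only [mvA2]
    have h1 := un s hs (.A 0); have h2 := un s hs (.A 3); have h3 := un s hs (.A 4)
    simp [Z1, thetaVec]
    linarith [hs.2]
  have hA3 : ∀ s ∈ Icc a (a+1), y s (.A 3) - y a (.A 3) = 0 := by
    apply passive_of_le h _ ha
    intro s hs
    rw [hzs s hs (.A 3)]; simp only [mvA3]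
    have h1 := un s hs (.A 0); have h2 := un s hs (.A 1); have h3 := un s hs (.A 4)
    simp [Z1, thetaVec]
    linarith [hs.2]
  have hA4 : ∀ s ∈ Icc a (a+1), y s (.A 4) - y a (.A 4) = 0 := by
    apply passive_of_le h _ ha
    intro s hs
    rw [hzs s hs (.A 4)]; simp only [mvA4]
    have h1 := un s hs (.A 0); have h2 := un s hs (.A 1); have h3 := un s hs (.A 2)
    simp [Z1, thetaVec]
    linarith [hs.2]
  -- A1 pushes at unit rate
  have hA1 : ∀ s ∈ Icc a (a+1), y s (.A 1) - y a (.A 1) = 1 * (s - a) := by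
    apply push_exact h _ ha zero_le_one
    intro s hs
    rw [hzs s hs (.A 1)]; simp only [mvA1]
    rw [hA2 s hs, hA3 s hs, hA4 s hs]
    simp [Z1, thetaVec]
    ring
  -- A0 passive
  have hA0 : ∀ s ∈ Icc a (a+1), y s (.A 0) - y a (.A 0) = 0 := by
    apply passive_of_le h _ ha
    intro s hs
    rw [hzs s hs (.A 0)]; simp only [mvA0]
    rw [hA1 s hs, hA2 s hs, hA3 s hs]
    simp [Z1, thetaVec]
    linarith [hs.1]
  -- B passive
  have hB : ∀ j, ∀ s ∈ Icc a (a+1), y s (.B j) - y a (.B j) = 0 := by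
    intro j
    apply passive_of_le h _ ha
    intro s hs
    rw [hzs s hs (.B j)]; simp only [mvB]
    rw [hA0 s hs]
    have hS : 0 ≤ ∑ x : Fin m × Bool × Bool,
        (if (M.Γ x.1 x.2.1 x.2.2).1 = j then 0 else 1)
          * (y s (.E x.1 x.2.1 x.2.2) - y a (.E x.1 x.2.1 x.2.2)) := by
      apply sumE_nonneg
      · intro x; by_cases hx : (M.Γ x.1 x.2.1 x.2.2).1 = j <;> simp [hx]
      · intro x; exact un s hs _
    have henc : Z1 i C₁ C₂ (.B j) = 0 := by simp [Z1]
    rw [henc]; simp only [thetaVec]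
    linarith
  -- C passive
  have hC : ∀ k, ∀ s ∈ Icc a (a+1), y s (.C k) - y a (.C k) = 0 := by
    intro k
    apply passive_of_le h _ ha
    intro s hs
    rw [hzs s hs (.C k)]; simp only [mvC]
    rw [hA0 s hs, hA3 s hs]
    have hS : 0 ≤ ∑ x : Fin m × Bool × Bool,
        (dlt M k x + 1) * (y s (.E x.1 x.2.1 x.2.2) - y a (.E x.1 x.2.1 x.2.2)) :=
      sumE_nonneg _ _ (fun x => dlt_plus_one_nonneg k x) (fun x => un s hs _)
    have h1 := un s hs (.D k)
    have henc : 0 ≤ Z1 i C₁ C₂ (.C k) := by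
      fin_cases k
      · show (0:ℝ) ≤ Z1 i C₁ C₂ (.C 0)
        by_cases hC1 : C₁ = 0
        · simp [Z1, hC1]
        · simp [Z1, hC1]
          omega
      · show (0:ℝ) ≤ Z1 i C₁ C₂ (.C 1)
        by_cases hC2 : C₂ = 0
        · simp [Z1, hC2]
        · simp [Z1, hC2]
          omega
    simp only [thetaVec]
    linarith
  -- E passive
  have hE : ∀ (i'' : Fin m) (b c : Bool), ∀ s ∈ Icc a (a+1),
      y s (.E i'' b c) - y a (.E i'' b c) = 0 := by
    intro i'' b c
    apply passive_of_le h _ ha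
    intro s hs
    rw [hzs s hs (.E i'' b c)]; simp only [mvE]
    rw [hA0 s hs, hA2 s hs, hB i'' s hs, hC 0 s hs, hC 1 s hs]
    have h7 := un s hs (.F i'' b c)
    have hU := ups_add3_nonneg (i := i) (i'' := i'') (b := b) (c := c) hb hc
    have henc : Z1 i C₁ C₂ (.E i'' b c) = 3 + Upsilon i C₁ C₂ i'' b c := by simp [Z1]
    rw [henc]; simp only [thetaVec]
    cases b <;> cases c <;> simp [bnum] <;> linarith
  -- F passive
  have hF : ∀ (i'' : Fin m) (b c : Bool), ∀ s ∈ Icc a (a+1),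
      y s (.F i'' b c) - y a (.F i'' b c) = 0 := by
    intro i'' b c
    apply passive_of_le h _ ha
    intro s hs
    rw [hzs s hs (.F i'' b c)]; simp only [mvF]
    rw [hA0 s hs, hA2 s hs, hA3 s hs, hB i'' s hs, hC 0 s hs, hC 1 s hs]
    have h7 := un s hs (.E i'' b c)
    have h8 := un s hs (.A 4)
    have hU := ups_add3_nonneg (i := i) (i'' := i'') (b := b) (c := c) hb hc
    have henc : Z1 i C₁ C₂ (.F i'' b c) = 4 + Upsilon i C₁ C₂ i'' b c := by simp [Z1]
    rw [henc]; simp only [thetaVec]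
    cases b <;> cases c <;> simp [bnum] <;> linarith
  -- D values
  have hD0 : ∀ s ∈ Icc a (a+1),
      y s (.D 0) - y a (.D 0) = if C₁ = 0 then 0 else s - a := by
    by_cases hCz : C₁ = 0
    · intro s hs
      rw [if_pos hCz]
      apply passive_of_le h _ ha _ s hs
      intro s' hs'
      rw [hzs s' hs' (.D 0)]; simp only [mvD]
      rw [hA1 s' hs', hC 0 s' hs']
      simp [Z1, thetaVec, hCz]
      linarith [hs'.2]
    · intro s hs
      rw [if_neg hCz]
      have := push_exact h (.D 0) ha zero_le_one (b := a+1) ?_ s hs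
      · linarith [this]
      · intro s' hs'
        rw [hzs s' hs' (.D 0)]; simp only [mvD]
        rw [hA1 s' hs', hC 0 s' hs']
        simp [Z1, thetaVec, hCz]
        ring
  have hD1 : ∀ s ∈ Icc a (a+1),
      y s (.D 1) - y a (.D 1) = if C₂ = 0 then 0 else s - a := by
    by_cases hCz : C₂ = 0
    · intro s hs
      rw [if_pos hCz]
      apply passive_of_le h _ ha _ s hs
      intro s' hs'
      rw [hzs s' hs' (.D 1)]; simp only [mvD]
      rw [hA1 s' hs', hC 1 s' hs']
      simp [Z1, thetaVec, hCz]
      linarith [hs'.2]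
    · intro s hs
      rw [if_neg hCz]
      have := push_exact h (.D 1) ha zero_le_one (b := a+1) ?_ s hs
      · linarith [this]
      · intro s' hs'
        rw [hzs s' hs' (.D 1)]; simp only [mvD]
        rw [hA1 s' hs', hC 1 s' hs']
        simp [Z1, thetaVec, hCz]
        ring
  -- final values
  have hmem : a + 1 ∈ Icc a (a+1) := ⟨by linarith, le_refl _⟩
  have hone : a + 1 - a = 1 := by ring
  have vA0 : z (a+1) (.A 0) = Z2 i C₁ C₂ (.A 0) := by
    rw [hzs _ hmem (.A 0)]; simp only [mvA0]
    rw [hA0 _ hmem, hA1 _ hmem, hA2 _ hmem, hA3 _ hmem]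
    simp [Z1, Z2, thetaVec]
    try norm_num
  have vA1 : z (a+1) (.A 1) = Z2 i C₁ C₂ (.A 1) := by
    rw [hzs _ hmem (.A 1)]; simp only [mvA1]
    rw [hA1 _ hmem, hA2 _ hmem, hA3 _ hmem, hA4 _ hmem]
    simp [Z1, Z2, thetaVec]
    try norm_num
  have vA2 : z (a+1) (.A 2) = Z2 i C₁ C₂ (.A 2) := by
    rw [hzs _ hmem (.A 2)]; simp only [mvA2]
    rw [hA0 _ hmem, hA2 _ hmem, hA3 _ hmem, hA4 _ hmem]
    simp [Z1, Z2, thetaVec]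
    try norm_num
  have vA3 : z (a+1) (.A 3) = Z2 i C₁ C₂ (.A 3) := by
    rw [hzs _ hmem (.A 3)]; simp only [mvA3]
    rw [hA0 _ hmem, hA1 _ hmem, hA3 _ hmem, hA4 _ hmem]
    simp [Z1, Z2, thetaVec]
    try norm_num
  have vA4 : z (a+1) (.A 4) = Z2 i C₁ C₂ (.A 4) := by
    rw [hzs _ hmem (.A 4)]; simp only [mvA4]
    rw [hA0 _ hmem, hA1 _ hmem, hA2 _ hmem, hA4 _ hmem]
    simp [Z1, Z2, thetaVec]
    try norm_num
  have vB : ∀ j, z (a+1) (.B j) = Z2 i C₁ C₂ (.B j) := by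
    intro j
    rw [hzs _ hmem (.B j)]; simp only [mvB]
    rw [hA0 _ hmem, hB j _ hmem]
    rw [sumE_zero _ _ (fun x => hE x.1 x.2.1 x.2.2 _ hmem)]
    simp [Z1, Z2, thetaVec]
  have vC0 : z (a+1) (.C 0) = Z2 i C₁ C₂ (.C 0) := by
    rw [hzs _ hmem (.C 0)]; simp only [mvC]
    rw [hA0 _ hmem, hA3 _ hmem, hD0 _ hmem, hC 0 _ hmem]
    rw [sumE_zero _ _ (fun x => hE x.1 x.2.1 x.2.2 _ hmem)]
    by_cases hC1 : C₁ = 0 <;> simp [Z1, Z2, thetaVec, hC1, hone] <;> ring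
  have vC1 : z (a+1) (.C 1) = Z2 i C₁ C₂ (.C 1) := by
    rw [hzs _ hmem (.C 1)]; simp only [mvC]
    rw [hA0 _ hmem, hA3 _ hmem, hD1 _ hmem, hC 1 _ hmem]
    rw [sumE_zero _ _ (fun x => hE x.1 x.2.1 x.2.2 _ hmem)]
    by_cases hC2 : C₂ = 0 <;> simp [Z1, Z2, thetaVec, hC2, hone] <;> ring
  have vD0 : z (a+1) (.D 0) = Z2 i C₁ C₂ (.D 0) := by
    rw [hzs _ hmem (.D 0)]; simp only [mvD]
    rw [hA1 _ hmem, hD0 _ hmem, hC 0 _ hmem]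
    by_cases hC1 : C₁ = 0 <;> simp [Z1, Z2, thetaVec, hC1, hone]
  have vD1 : z (a+1) (.D 1) = Z2 i C₁ C₂ (.D 1) := by
    rw [hzs _ hmem (.D 1)]; simp only [mvD]
    rw [hA1 _ hmem, hD1 _ hmem, hC 1 _ hmem]
    by_cases hC2 : C₂ = 0 <;> simp [Z1, Z2, thetaVec, hC2, hone]
  have vE : ∀ i'' b c, z (a+1) (.E i'' b c) = Z2 i C₁ C₂ (.E i'' b c) := by
    intro i'' b c
    rw [hzs _ hmem (.E i'' b c)]; simp only [mvE]
    rw [hA0 _ hmem, hA2 _ hmem, hB i'' _ hmem, hC 0 _ hmem, hC 1 _ hmem,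
      hE i'' b c _ hmem, hF i'' b c _ hmem]
    simp [Z1, Z2, thetaVec]
    try ring
  have vF : ∀ i'' b c, z (a+1) (.F i'' b c) = Z2 i C₁ C₂ (.F i'' b c) := by
    intro i'' b c
    rw [hzs _ hmem (.F i'' b c)]; simp only [mvF]
    rw [hA0 _ hmem, hA2 _ hmem, hA3 _ hmem, hA4 _ hmem, hB i'' _ hmem,
      hC 0 _ hmem, hC 1 _ hmem, hE i'' b c _ hmem, hF i'' b c _ hmem]
    simp [Z1, Z2, thetaVec]
    try ring
  intro p
  cases p with
  | A k =>
    fin_cases k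
    · exact vA0
    · exact vA1
    · exact vA2
    · exact vA3
    · exact vA4
  | B j => exact vB j
  | C k =>
    fin_cases k
    · exact vC0
    · exact vC1
  | D k =>
    fin_cases k
    · exact vD0
    · exact vD1
  | E i'' b c => exact vE i'' b c
  | F i'' b c => exact vF i'' b c

end CMAux
namespace CMAux
open Set Finset

variable {m : ℕ} {M : CounterMachine m} {i0 : Fin m} {C₁0 C₂0 : ℕ}
  {y z : ℝ → Idx m → ℝ}

set_option maxHeartbeats 1000000 in
lemma int2 (h : IsSkorokhodSolution (Rmat M) (fluidX i0 C₁0 C₂0) y z)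
    (i : Fin m) (C₁ C₂ : ℕ) {bstar cstar : Bool}
    (hb : bstar = decide (0 < C₁)) (hc : cstar = decide (0 < C₂))
    {a : ℝ} (ha : 0 ≤ a)
    (hz2 : ∀ p, z a p = Z2 i C₁ C₂ p) :
    ∀ p, z (a + 1) p = Z3 M i C₁ C₂ bstar cstar p := by
  have hzs : ∀ s ∈ Icc a (a+1), ∀ p, z s p = Z2 i C₁ C₂ p
      + thetaVec m p * (s - a) + (Rmat M).mulVec (fun q => y s q - y a q) p := by
    intro s hs p
    rw [zdiff h ha (by linarith [hs.1] : (0:ℝ) ≤ s) p, hz2 p]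
  have un : ∀ s ∈ Icc a (a+1), ∀ q, 0 ≤ y s q - y a q :=
    fun s hs q => ydiff_nonneg h ha hs.1 q
  -- A0, A3, A4 passive
  have hA0 : ∀ s ∈ Icc a (a+1), y s (.A 0) - y a (.A 0) = 0 := by
    apply passive_of_le h _ ha
    intro s hs
    rw [hzs s hs (.A 0)]; simp only [mvA0]
    have h1 := un s hs (.A 1); have h2 := un s hs (.A 2); have h3 := un s hs (.A 3)
    simp [Z2, thetaVec]
    linarith [hs.2]
  have hA3 : ∀ s ∈ Icc a (a+1), y s (.A 3) - y a (.A 3) = 0 := by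
    apply passive_of_le h _ ha
    intro s hs
    rw [hzs s hs (.A 3)]; simp only [mvA3]
    have h1 := un s hs (.A 0); have h2 := un s hs (.A 1); have h3 := un s hs (.A 4)
    simp [Z2, thetaVec]
    linarith [hs.2]
  have hA4 : ∀ s ∈ Icc a (a+1), y s (.A 4) - y a (.A 4) = 0 := by
    apply passive_of_le h _ ha
    intro s hs
    rw [hzs s hs (.A 4)]; simp only [mvA4]
    have h1 := un s hs (.A 0); have h2 := un s hs (.A 1); have h3 := un s hs (.A 2)
    simp [Z2, thetaVec]
    linarith [hs.2]
  -- A2 pushes at unit rate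
  have hA2 : ∀ s ∈ Icc a (a+1), y s (.A 2) - y a (.A 2) = 1 * (s - a) := by
    apply push_exact h _ ha zero_le_one
    intro s hs
    rw [hzs s hs (.A 2)]; simp only [mvA2]
    rw [hA0 s hs, hA3 s hs, hA4 s hs]
    simp [Z2, thetaVec]
    ring
  -- A1 passive
  have hA1 : ∀ s ∈ Icc a (a+1), y s (.A 1) - y a (.A 1) = 0 := by
    apply passive_of_le h _ ha
    intro s hs
    rw [hzs s hs (.A 1)]; simp only [mvA1]
    rw [hA2 s hs, hA3 s hs, hA4 s hs]
    simp [Z2, thetaVec]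
    linarith [hs.1]
  -- B passive
  have hB : ∀ j, ∀ s ∈ Icc a (a+1), y s (.B j) - y a (.B j) = 0 := by
    intro j
    apply passive_of_le h _ ha
    intro s hs
    rw [hzs s hs (.B j)]; simp only [mvB]
    rw [hA0 s hs]
    have hS : 0 ≤ ∑ x : Fin m × Bool × Bool,
        (if (M.Γ x.1 x.2.1 x.2.2).1 = j then 0 else 1)
          * (y s (.E x.1 x.2.1 x.2.2) - y a (.E x.1 x.2.1 x.2.2)) := by
      apply sumE_nonneg
      · intro x; by_cases hx : (M.Γ x.1 x.2.1 x.2.2).1 = j <;> simp [hx]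
      · intro x; exact un s hs _
    have henc : Z2 i C₁ C₂ (.B j) = 0 := by simp [Z2]
    rw [henc]; simp only [thetaVec]
    linarith
  -- D passive
  have hD : ∀ k, ∀ s ∈ Icc a (a+1), y s (.D k) - y a (.D k) = 0 := by
    intro k
    apply passive_of_le h _ ha
    intro s hs
    rw [hzs s hs (.D k)]; simp only [mvD]
    rw [hA1 s hs]
    have h1 := un s hs (.C k)
    have henc : Z2 i C₁ C₂ (.D k) = 0 := by simp [Z2]
    rw [henc]; simp only [thetaVec]
    linarith
  -- C passive
  have hC : ∀ k, ∀ s ∈ Icc a (a+1), y s (.C k) - y a (.C k) = 0 := by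
    intro k
    have henc : 0 ≤ Z2 i C₁ C₂ (.C k) := by
      fin_cases k
      · show (0:ℝ) ≤ Z2 i C₁ C₂ (.C 0); simp [Z2]
      · show (0:ℝ) ≤ Z2 i C₁ C₂ (.C 1); simp [Z2]
    apply passive_of_le h _ ha
    intro s hs
    rw [hzs s hs (.C k)]; simp only [mvC]
    rw [hA0 s hs, hA3 s hs]
    have hS : 0 ≤ ∑ x : Fin m × Bool × Bool,
        (dlt M k x + 1) * (y s (.E x.1 x.2.1 x.2.2) - y a (.E x.1 x.2.1 x.2.2)) :=
      sumE_nonneg _ _ (fun x => dlt_plus_one_nonneg k x) (fun x => un s hs _)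
    have h1 := un s hs (.D k)
    simp only [thetaVec]
    linarith
  -- F passive
  have hF : ∀ (i'' : Fin m) (b c : Bool), ∀ s ∈ Icc a (a+1),
      y s (.F i'' b c) - y a (.F i'' b c) = 0 := by
    intro i'' b c
    apply passive_of_le h _ ha
    intro s hs
    rw [hzs s hs (.F i'' b c)]; simp only [mvF]
    rw [hA0 s hs, hA2 s hs, hA3 s hs, hA4 s hs, hB i'' s hs, hC 0 s hs, hC 1 s hs]
    have h7 := un s hs (.E i'' b c)
    have hU := ups_add3_nonneg (i := i) (i'' := i'') (b := b) (c := c) hb hc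
    have henc : Z2 i C₁ C₂ (.F i'' b c) = 4 + Upsilon i C₁ C₂ i'' b c := by simp [Z2]
    rw [henc]; simp only [thetaVec]
    cases b <;> cases c <;> simp [bnum] <;> linarith [hs.2]
  -- E values : the configuration coordinate pushes at unit rate
  have hE : ∀ x : Fin m × Bool × Bool, ∀ s ∈ Icc a (a+1),
      y s (.E x.1 x.2.1 x.2.2) - y a (.E x.1 x.2.1 x.2.2)
        = if x = (i, bstar, cstar) then s - a else 0 := by
    rintro ⟨i'', b, c⟩
    by_cases hstar : ((i'', b, c) : Fin m × Bool × Bool) = (i, bstar, cstar)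
    · intro s hs
      rw [if_pos hstar]
      have := push_exact h (.E i'' b c) ha zero_le_one (b := a+1) ?_ s hs
      · linarith [this]
      · intro s' hs'
        rw [hzs s' hs' (.E i'' b c)]; simp only [mvE]
        rw [hA0 s' hs', hA2 s' hs', hB i'' s' hs', hC 0 s' hs', hC 1 s' hs',
          hF i'' b c s' hs']
        have hU : Upsilon i C₁ C₂ i'' b c = -3 := by
          obtain ⟨h1', h2', h3'⟩ : i'' = i ∧ b = bstar ∧ c = cstar := by
            simpa [Prod.ext_iff] using hstar
          rw [h1', h2', h3']; exact ups_star hb hc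
        have henc : Z2 i C₁ C₂ (.E i'' b c) = 3 + Upsilon i C₁ C₂ i'' b c := by simp [Z2]
        rw [henc, hU]; simp only [thetaVec]
        cases b <;> cases c <;> simp [bnum] <;> ring
    · intro s hs
      rw [if_neg hstar]
      apply passive_of_le h _ ha _ s hs
      intro s' hs'
      rw [hzs s' hs' (.E i'' b c)]; simp only [mvE]
      rw [hA0 s' hs', hA2 s' hs', hB i'' s' hs', hC 0 s' hs', hC 1 s' hs']
      have h7 := un s' hs' (.F i'' b c)
      have hU := ups_nonstar (i := i) (C₁ := C₁) (C₂ := C₂) hb hc hstar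
      have henc : Z2 i C₁ C₂ (.E i'' b c) = 3 + Upsilon i C₁ C₂ i'' b c := by simp [Z2]
      rw [henc]; simp only [thetaVec]
      cases b <;> cases c <;> simp [bnum] <;> linarith [hs'.2]
  -- final values
  have hmem : a + 1 ∈ Icc a (a+1) := ⟨by linarith, le_refl _⟩
  have hone : a + 1 - a = 1 := by ring
  have hEone : ∀ x : Fin m × Bool × Bool,
      y (a+1) (.E x.1 x.2.1 x.2.2) - y a (.E x.1 x.2.1 x.2.2)
        = if x = (i, bstar, cstar) then 1 else 0 := by
    intro x; rw [hE x _ hmem, hone]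
  have vA0 : z (a+1) (.A 0) = Z3 M i C₁ C₂ bstar cstar (.A 0) := by
    rw [hzs _ hmem (.A 0)]; simp only [mvA0]
    rw [hA0 _ hmem, hA1 _ hmem, hA2 _ hmem, hA3 _ hmem]
    simp [Z2, Z3, thetaVec]
  have vA1 : z (a+1) (.A 1) = Z3 M i C₁ C₂ bstar cstar (.A 1) := by
    rw [hzs _ hmem (.A 1)]; simp only [mvA1]
    rw [hA1 _ hmem, hA2 _ hmem, hA3 _ hmem, hA4 _ hmem]
    simp [Z2, Z3, thetaVec]
    norm_num
  have vA2 : z (a+1) (.A 2) = Z3 M i C₁ C₂ bstar cstar (.A 2) := by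
    rw [hzs _ hmem (.A 2)]; simp only [mvA2]
    rw [hA0 _ hmem, hA2 _ hmem, hA3 _ hmem, hA4 _ hmem]
    simp [Z2, Z3, thetaVec]
  have vA3 : z (a+1) (.A 3) = Z3 M i C₁ C₂ bstar cstar (.A 3) := by
    rw [hzs _ hmem (.A 3)]; simp only [mvA3]
    rw [hA0 _ hmem, hA1 _ hmem, hA3 _ hmem, hA4 _ hmem]
    simp [Z2, Z3, thetaVec]
  have vA4 : z (a+1) (.A 4) = Z3 M i C₁ C₂ bstar cstar (.A 4) := by
    rw [hzs _ hmem (.A 4)]; simp only [mvA4]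
    rw [hA0 _ hmem, hA1 _ hmem, hA2 _ hmem, hA4 _ hmem]
    simp [Z2, Z3, thetaVec]
  have vB : ∀ j, z (a+1) (.B j) = Z3 M i C₁ C₂ bstar cstar (.B j) := by
    intro j
    rw [hzs _ hmem (.B j)]; simp only [mvB]
    rw [hA0 _ hmem, hB j _ hmem]
    rw [sumE_single _ _ (i, bstar, cstar) 1 hEone]
    simp [Z2, Z3, thetaVec]
  have vC0 : z (a+1) (.C 0) = Z3 M i C₁ C₂ bstar cstar (.C 0) := by
    rw [hzs _ hmem (.C 0)]; simp only [mvC]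
    rw [hA0 _ hmem, hA3 _ hmem, hD 0 _ hmem, hC 0 _ hmem]
    rw [sumE_single _ _ (i, bstar, cstar) 1 hEone]
    simp [Z2, Z3, thetaVec, dlt]
    ring
  have vC1 : z (a+1) (.C 1) = Z3 M i C₁ C₂ bstar cstar (.C 1) := by
    rw [hzs _ hmem (.C 1)]; simp only [mvC]
    rw [hA0 _ hmem, hA3 _ hmem, hD 1 _ hmem, hC 1 _ hmem]
    rw [sumE_single _ _ (i, bstar, cstar) 1 hEone]
    simp [Z2, Z3, thetaVec, dlt]
    ring
  have vD : ∀ k, z (a+1) (.D k) = Z3 M i C₁ C₂ bstar cstar (.D k) := by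
    intro k
    rw [hzs _ hmem (.D k)]; simp only [mvD]
    rw [hA1 _ hmem, hD k _ hmem, hC k _ hmem]
    simp [Z2, Z3, thetaVec]
  have vE : ∀ i'' b c, z (a+1) (.E i'' b c) = Z3 M i C₁ C₂ bstar cstar (.E i'' b c) := by
    intro i'' b c
    rw [hzs _ hmem (.E i'' b c)]; simp only [mvE]
    rw [hA0 _ hmem, hA2 _ hmem, hB i'' _ hmem, hC 0 _ hmem, hC 1 _ hmem,
      hE (i'', b, c) _ hmem, hF i'' b c _ hmem]
    simp only [Z2, Z3, thetaVec, indC, hone]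
    ring
  have vF : ∀ i'' b c, z (a+1) (.F i'' b c) = Z3 M i C₁ C₂ bstar cstar (.F i'' b c) := by
    intro i'' b c
    rw [hzs _ hmem (.F i'' b c)]; simp only [mvF]
    rw [hA0 _ hmem, hA2 _ hmem, hA3 _ hmem, hA4 _ hmem, hB i'' _ hmem,
      hC 0 _ hmem, hC 1 _ hmem, hE (i'', b, c) _ hmem, hF i'' b c _ hmem]
    simp only [Z2, Z3, thetaVec, indC, hone]
    ring
  intro p
  cases p with
  | A k =>
    fin_cases k
    · exact vA0
    · exact vA1
    · exact vA2
    · exact vA3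
    · exact vA4
  | B j => exact vB j
  | C k =>
    fin_cases k
    · exact vC0
    · exact vC1
  | D k => exact vD k
  | E i'' b c => exact vE i'' b c
  | F i'' b c => exact vF i'' b c

end CMAux
namespace CMAux
open Set Finset

variable {m : ℕ} {M : CounterMachine m} {i0 : Fin m} {C₁0 C₂0 : ℕ}
  {y z : ℝ → Idx m → ℝ}

set_option maxHeartbeats 1600000 in
lemma int3 (h : IsSkorokhodSolution (Rmat M) (fluidX i0 C₁0 C₂0) y z)
    (i : Fin m) (C₁ C₂ : ℕ) {bstar cstar : Bool}
    (hb : bstar = decide (0 < C₁)) (hc : cstar = decide (0 < C₂))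
    {a : ℝ} (ha : 0 ≤ a)
    (hz3 : ∀ p, z a p = Z3 M i C₁ C₂ bstar cstar p) :
    (∀ s ∈ Icc a (a+1), y s (.A 3) - y a (.A 3) = s - a) ∧
    (∀ k : Fin 5, k ≠ 3 → ∀ s ∈ Icc a (a+1), y s (.A k) - y a (.A k) = 0) ∧
    (∀ j, ∀ s ∈ Icc a (a+1), y s (.B j) - y a (.B j) = 0) ∧
    (∀ k : Fin 2, ∀ s ∈ Icc a (a+1), y s (.C k) - y a (.C k) = 0) ∧
    (∀ k : Fin 2, ∀ s ∈ Icc a (a+1), y s (.D k) - y a (.D k) = 0) ∧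
    (∀ (i'' : Fin m) (b c : Bool), ∀ s ∈ Icc a (a+1),
      y s (.E i'' b c) - y a (.E i'' b c) = 0) ∧
    (∀ (i'' : Fin m) (b c : Bool), ∀ s ∈ Icc a (a+1),
      y s (.F i'' b c) - y a (.F i'' b c)
        = 4 * max 0 ((s - a)
            - (3 + Upsilon i C₁ C₂ i'' b c + indC ((i'', b, c) = (i, bstar, cstar))) / 4)) ∧
    (∀ p, z (a + 1) p = Z4 M i C₁ C₂ bstar cstar p) := by
  have hzs : ∀ s ∈ Icc a (a+1), ∀ p, z s p = Z3 M i C₁ C₂ bstar cstar p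
      + thetaVec m p * (s - a) + (Rmat M).mulVec (fun q => y s q - y a q) p := by
    intro s hs p
    rw [zdiff h ha (by linarith [hs.1] : (0:ℝ) ≤ s) p, hz3 p]
  have un : ∀ s ∈ Icc a (a+1), ∀ q, 0 ≤ y s q - y a q :=
    fun s hs q => ydiff_nonneg h ha hs.1 q
  -- A0, A1, A4 passive
  have hA0 : ∀ s ∈ Icc a (a+1), y s (.A 0) - y a (.A 0) = 0 := by
    apply passive_of_le h _ ha
    intro s hs
    rw [hzs s hs (.A 0)]; simp only [mvA0]
    have h1 := un s hs (.A 1); have h2 := un s hs (.A 2); have h3 := un s hs (.A 3)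
    simp [Z3, thetaVec]
    linarith [hs.2]
  have hA1 : ∀ s ∈ Icc a (a+1), y s (.A 1) - y a (.A 1) = 0 := by
    apply passive_of_le h _ ha
    intro s hs
    rw [hzs s hs (.A 1)]; simp only [mvA1]
    have h1 := un s hs (.A 2); have h2 := un s hs (.A 3); have h3 := un s hs (.A 4)
    simp [Z3, thetaVec]
    linarith [hs.2]
  have hA4 : ∀ s ∈ Icc a (a+1), y s (.A 4) - y a (.A 4) = 0 := by
    apply passive_of_le h _ ha
    intro s hs
    rw [hzs s hs (.A 4)]; simp only [mvA4]
    have h1 := un s hs (.A 0); have h2 := un s hs (.A 1); have h3 := un s hs (.A 2)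
    simp [Z3, thetaVec]
    linarith [hs.2]
  -- A3 pushes at unit rate
  have hA3 : ∀ s ∈ Icc a (a+1), y s (.A 3) - y a (.A 3) = s - a := by
    have := push_exact h (.A 3) ha zero_le_one (b := a+1) ?_
    · intro s hs; have h1 := this s hs; linarith
    · intro s hs
      rw [hzs s hs (.A 3)]; simp only [mvA3]
      rw [hA0 s hs, hA1 s hs, hA4 s hs]
      simp [Z3, thetaVec]
      ring
  -- A2 passive
  have hA2 : ∀ s ∈ Icc a (a+1), y s (.A 2) - y a (.A 2) = 0 := by
    apply passive_of_le h _ ha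
    intro s hs
    rw [hzs s hs (.A 2)]; simp only [mvA2]
    rw [hA0 s hs, hA3 s hs, hA4 s hs]
    simp [Z3, thetaVec]
    linarith [hs.1]
  -- B passive
  have hB : ∀ j, ∀ s ∈ Icc a (a+1), y s (.B j) - y a (.B j) = 0 := by
    intro j
    apply passive_of_le h _ ha
    intro s hs
    rw [hzs s hs (.B j)]; simp only [mvB]
    rw [hA0 s hs]
    have hS : 0 ≤ ∑ x : Fin m × Bool × Bool,
        (if (M.Γ x.1 x.2.1 x.2.2).1 = j then 0 else 1)
          * (y s (.E x.1 x.2.1 x.2.2) - y a (.E x.1 x.2.1 x.2.2)) := by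
      apply sumE_nonneg
      · intro x; by_cases hx : (M.Γ x.1 x.2.1 x.2.2).1 = j <;> simp [hx]
      · intro x; exact un s hs _
    have henc : 0 ≤ Z3 M i C₁ C₂ bstar cstar (.B j) := by
      by_cases hj : (M.Γ i bstar cstar).1 = j <;> simp [Z3, hj]
    simp only [thetaVec]
    linarith
  -- consistency : counter values stay nonnegative
  have hcons0 : 0 ≤ (C₁:ℝ) + ((M.Γ i bstar cstar).2.1 : ℝ) := by
    by_cases hC1 : C₁ = 0
    · have hbf : bstar = false := by rw [hb, hC1]; simp
      have := (M.consistent i bstar cstar).1 hbf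
      have h2 : (0:ℝ) ≤ ((M.Γ i bstar cstar).2.1 : ℝ) := by exact_mod_cast this
      have h3 : (0:ℝ) ≤ (C₁:ℝ) := Nat.cast_nonneg _
      linarith
    · have h2 : (1:ℝ) ≤ (C₁:ℝ) := by exact_mod_cast Nat.one_le_iff_ne_zero.2 hC1
      have h3 := (dlt_mem (M := M) 0 (i, bstar, cstar)).1
      simp only [dlt] at h3
      norm_num at h3
      linarith
  have hcons1 : 0 ≤ (C₂:ℝ) + ((M.Γ i bstar cstar).2.2 : ℝ) := by
    by_cases hC2 : C₂ = 0
    · have hcf : cstar = false := by rw [hc, hC2]; simp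
      have := (M.consistent i bstar cstar).2 hcf
      have h2 : (0:ℝ) ≤ ((M.Γ i bstar cstar).2.2 : ℝ) := by exact_mod_cast this
      have h3 : (0:ℝ) ≤ (C₂:ℝ) := Nat.cast_nonneg _
      linarith
    · have h2 : (1:ℝ) ≤ (C₂:ℝ) := by exact_mod_cast Nat.one_le_iff_ne_zero.2 hC2
      have h3 := (dlt_mem (M := M) 1 (i, bstar, cstar)).1
      simp only [dlt] at h3
      norm_num at h3
      linarith
  -- C passive
  have hC : ∀ k : Fin 2, ∀ s ∈ Icc a (a+1), y s (.C k) - y a (.C k) = 0 := by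
    intro k
    have henc : 1 ≤ Z3 M i C₁ C₂ bstar cstar (.C k) := by
      fin_cases k
      · show (1:ℝ) ≤ Z3 M i C₁ C₂ bstar cstar (.C 0)
        simp [Z3]; linarith [hcons0]
      · show (1:ℝ) ≤ Z3 M i C₁ C₂ bstar cstar (.C 1)
        simp [Z3]; linarith [hcons1]
    apply passive_of_le h _ ha
    intro s hs
    rw [hzs s hs (.C k)]; simp only [mvC]
    rw [hA0 s hs, hA3 s hs]
    have hS : 0 ≤ ∑ x : Fin m × Bool × Bool,
        (dlt M k x + 1) * (y s (.E x.1 x.2.1 x.2.2) - y a (.E x.1 x.2.1 x.2.2)) :=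
      sumE_nonneg _ _ (fun x => dlt_plus_one_nonneg k x) (fun x => un s hs _)
    have h1 := un s hs (.D k)
    simp only [thetaVec]
    linarith [hs.2]
  -- D passive
  have hD : ∀ k : Fin 2, ∀ s ∈ Icc a (a+1), y s (.D k) - y a (.D k) = 0 := by
    intro k
    apply passive_of_le h _ ha
    intro s hs
    rw [hzs s hs (.D k)]; simp only [mvD]
    rw [hA1 s hs]
    have h1 := un s hs (.C k)
    have henc : Z3 M i C₁ C₂ bstar cstar (.D k) = 0 := by simp [Z3]
    rw [henc]; simp only [thetaVec]
    linarith
  -- E passive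
  have hE : ∀ (i'' : Fin m) (b c : Bool), ∀ s ∈ Icc a (a+1),
      y s (.E i'' b c) - y a (.E i'' b c) = 0 := by
    intro i'' b c
    apply passive_of_le h _ ha
    intro s hs
    rw [hzs s hs (.E i'' b c)]; simp only [mvE]
    rw [hA0 s hs, hA2 s hs, hB i'' s hs, hC 0 s hs, hC 1 s hs]
    have h7 := un s hs (.F i'' b c)
    have hU := ups_Wm1_nonneg (i := i) (i'' := i'') (b := b) (c := c) hb hc
    have henc : Z3 M i C₁ C₂ bstar cstar (.E i'' b c)
        = 2 + Upsilon i C₁ C₂ i'' b c + indC ((i'', b, c) = (i, bstar, cstar)) := by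
      simp [Z3]
    rw [henc]; simp only [thetaVec]
    linarith
  -- F : passive then active at rate 4
  have hF : ∀ (i'' : Fin m) (b c : Bool), ∀ s ∈ Icc a (a+1),
      y s (.F i'' b c) - y a (.F i'' b c)
        = 4 * max 0 ((s - a)
            - (3 + Upsilon i C₁ C₂ i'' b c + indC ((i'', b, c) = (i, bstar, cstar))) / 4) := by
    intro i'' b c
    set W : ℝ := 3 + Upsilon i C₁ C₂ i'' b c + indC ((i'', b, c) = (i, bstar, cstar)) with hWdef
    have hW1 : 1 ≤ W := ups_W_ge_one hb hc
    have hW3 : W ≤ 3 := ups_W_le_three hb hc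
    have ha' : 0 ≤ a + W/4 := by linarith
    have henc : Z3 M i C₁ C₂ bstar cstar (.F i'' b c) = W := by rw [hWdef]; simp [Z3]
    have hzF : ∀ s ∈ Icc a (a+1), z s (.F i'' b c)
        = W - 4*(s-a) + (y s (.F i'' b c) - y a (.F i'' b c)) := by
      intro s hs
      rw [hzs s hs (.F i'' b c)]; simp only [mvF]
      rw [hA0 s hs, hA2 s hs, hA3 s hs, hA4 s hs, hB i'' s hs, hC 0 s hs, hC 1 s hs,
        hE i'' b c s hs, henc]
      simp only [thetaVec]
      ring
    have hpass : ∀ s ∈ Icc a (a + W/4), y s (.F i'' b c) - y a (.F i'' b c) = 0 := by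
      apply passive_of_le h _ ha
      intro s hs
      have hsIcc : s ∈ Icc a (a+1) := ⟨hs.1, by linarith [hs.2]⟩
      rw [hzF s hsIcc]
      linarith [hs.2]
    have h0 : y (a + W/4) (.F i'' b c) - y a (.F i'' b c) = 0 :=
      hpass _ ⟨by linarith, le_rfl⟩
    have hact : ∀ s ∈ Icc (a + W/4) (a+1),
        y s (.F i'' b c) - y (a + W/4) (.F i'' b c) = 4*(s - (a + W/4)) := by
      apply push_exact h _ ha' (by norm_num : (0:ℝ) ≤ 4)
      intro s hs
      have hsIcc : s ∈ Icc a (a+1) := ⟨by linarith [hs.1], hs.2⟩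
      rw [hzF s hsIcc]
      linear_combination h0
    intro s hs
    rcases le_total s (a + W/4) with hcase | hcase
    · rw [hpass s ⟨hs.1, hcase⟩, max_eq_left (by linarith)]
      ring
    · have h1 := hact s ⟨hcase, hs.2⟩
      rw [max_eq_right (by linarith)]
      linear_combination h1 + h0
  -- final values
  have hmem : a + 1 ∈ Icc a (a+1) := ⟨by linarith, le_refl _⟩
  have hone : a + 1 - a = 1 := by ring
  have hFone : ∀ (i'' : Fin m) (b c : Bool),
      y (a+1) (.F i'' b c) - y a (.F i'' b c)
        = 4 - (3 + Upsilon i C₁ C₂ i'' b c + indC ((i'', b, c) = (i, bstar, cstar))) := by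
    intro i'' b c
    have hW3 := ups_W_le_three (i := i) (i'' := i'') (b := b) (c := c) hb hc
    rw [hF i'' b c _ hmem, hone, max_eq_right (by linarith)]
    ring
  have vA0 : z (a+1) (.A 0) = Z4 M i C₁ C₂ bstar cstar (.A 0) := by
    rw [hzs _ hmem (.A 0)]; simp only [mvA0]
    rw [hA0 _ hmem, hA1 _ hmem, hA2 _ hmem, hA3 _ hmem]
    simp [Z3, Z4, thetaVec]
  have vA1 : z (a+1) (.A 1) = Z4 M i C₁ C₂ bstar cstar (.A 1) := by
    rw [hzs _ hmem (.A 1)]; simp only [mvA1]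
    rw [hA1 _ hmem, hA2 _ hmem, hA3 _ hmem, hA4 _ hmem]
    simp [Z3, Z4, thetaVec]
  have vA2 : z (a+1) (.A 2) = Z4 M i C₁ C₂ bstar cstar (.A 2) := by
    rw [hzs _ hmem (.A 2)]; simp only [mvA2]
    rw [hA0 _ hmem, hA2 _ hmem, hA3 _ hmem, hA4 _ hmem]
    simp [Z3, Z4, thetaVec]
    norm_num
  have vA3 : z (a+1) (.A 3) = Z4 M i C₁ C₂ bstar cstar (.A 3) := by
    rw [hzs _ hmem (.A 3)]; simp only [mvA3]
    rw [hA0 _ hmem, hA1 _ hmem, hA3 _ hmem, hA4 _ hmem]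
    simp [Z3, Z4, thetaVec]
  have vA4 : z (a+1) (.A 4) = Z4 M i C₁ C₂ bstar cstar (.A 4) := by
    rw [hzs _ hmem (.A 4)]; simp only [mvA4]
    rw [hA0 _ hmem, hA1 _ hmem, hA2 _ hmem, hA4 _ hmem]
    simp [Z3, Z4, thetaVec]
  have vB : ∀ j, z (a+1) (.B j) = Z4 M i C₁ C₂ bstar cstar (.B j) := by
    intro j
    rw [hzs _ hmem (.B j)]; simp only [mvB]
    rw [hA0 _ hmem, hB j _ hmem]
    rw [sumE_zero _ _ (fun x => hE x.1 x.2.1 x.2.2 _ hmem)]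
    simp [Z3, Z4, thetaVec]
  have vC0 : z (a+1) (.C 0) = Z4 M i C₁ C₂ bstar cstar (.C 0) := by
    rw [hzs _ hmem (.C 0)]; simp only [mvC]
    rw [hA0 _ hmem, hA3 _ hmem, hD 0 _ hmem, hC 0 _ hmem]
    rw [sumE_zero _ _ (fun x => hE x.1 x.2.1 x.2.2 _ hmem)]
    simp [Z3, Z4, thetaVec, hone]
    try ring
  have vC1 : z (a+1) (.C 1) = Z4 M i C₁ C₂ bstar cstar (.C 1) := by
    rw [hzs _ hmem (.C 1)]; simp only [mvC]
    rw [hA0 _ hmem, hA3 _ hmem, hD 1 _ hmem, hC 1 _ hmem]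
    rw [sumE_zero _ _ (fun x => hE x.1 x.2.1 x.2.2 _ hmem)]
    simp [Z3, Z4, thetaVec, hone]
    try ring
  have vD : ∀ k, z (a+1) (.D k) = Z4 M i C₁ C₂ bstar cstar (.D k) := by
    intro k
    rw [hzs _ hmem (.D k)]; simp only [mvD]
    rw [hA1 _ hmem, hD k _ hmem, hC k _ hmem]
    simp [Z3, Z4, thetaVec]
  have vE : ∀ i'' b c, z (a+1) (.E i'' b c) = Z4 M i C₁ C₂ bstar cstar (.E i'' b c) := by
    intro i'' b c
    rw [hzs _ hmem (.E i'' b c)]; simp only [mvE]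
    rw [hA0 _ hmem, hA2 _ hmem, hB i'' _ hmem, hC 0 _ hmem, hC 1 _ hmem,
      hE i'' b c _ hmem, hFone i'' b c]
    simp only [Z3, Z4, thetaVec]
    ring
  have vF : ∀ i'' b c, z (a+1) (.F i'' b c) = Z4 M i C₁ C₂ bstar cstar (.F i'' b c) := by
    intro i'' b c
    rw [hzs _ hmem (.F i'' b c)]; simp only [mvF]
    rw [hA0 _ hmem, hA2 _ hmem, hA3 _ hmem, hA4 _ hmem, hB i'' _ hmem,
      hC 0 _ hmem, hC 1 _ hmem, hE i'' b c _ hmem, hFone i'' b c]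
    simp only [Z3, Z4, thetaVec, hone]
    ring
  refine ⟨hA3, ?_, hB, hC, hD, hE, hF, ?_⟩
  · intro k hk
    fin_cases k
    · exact hA0
    · exact hA1
    · exact hA2
    · exact absurd rfl hk
    · exact hA4
  · intro p
    cases p with
    | A k =>
      fin_cases k
      · exact vA0
      · exact vA1
      · exact vA2
      · exact vA3
      · exact vA4
    | B j => exact vB j
    | C k =>
      fin_cases k
      · exact vC0
      · exact vC1
    | D k => exact vD k
    | E i'' b c => exact vE i'' b c
    | F i'' b c => exact vF i'' b c

end CMAux

open CMAux Set in
set_option maxHeartbeats 1600000 in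
/-- Dynamics over the interval `(5t+3, 5t+4)`: `y_{A,4}` is
active at unit rate; each `y_{F,(i″,b,c)}` is passive on `(5t+3, 5t+3+q)` and
active at rate 4 on `(5t+3+q, 5t+4)` where
`q = (3 + Υ(i″,b,c) + 1{(i″,b,c)=(i,b*,c*)})/4`; all other `y`-coordinates are
passive; and the state `z(5t+4)` is as indicated. -/
theorem dynamics_interval_3 {m : ℕ} (M : CounterMachine m)
    (i0 : Fin m) (C₁0 C₂0 : ℕ) (y z : ℝ → Idx m → ℝ)
    (h : IsSkorokhodSolution (Rmat M) (fluidX i0 C₁0 C₂0) y z)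
    (t : ℕ) (i : Fin m) (C₁ C₂ : ℕ)
    (htraj : (M.step)^[t] (i0, C₁0, C₂0) = (i, C₁, C₂))
    (hz : z (5 * (t : ℝ)) = encCfg i C₁ C₂)
    (bstar cstar : Bool) (hb : bstar = decide (0 < C₁)) (hc : cstar = decide (0 < C₂))
    (i' : Fin m) (Δ₁ Δ₂ : ℤ) (hΓ : M.Γ i bstar cstar = (i', Δ₁, Δ₂)) :
    (UnitActive (fun s => y s (.A 3)) (5 * (t : ℝ) + 3) (5 * (t : ℝ) + 4)) ∧
    (∀ (i'' : Fin m) (b c : Bool),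
      Passive (fun s => y s (.F i'' b c)) (5 * (t : ℝ) + 3)
        (5 * (t : ℝ) + 3 +
          (3 + Upsilon i C₁ C₂ i'' b c + indC ((i'', b, c) = (i, bstar, cstar))) / 4) ∧
      ActiveAtRate (fun s => y s (.F i'' b c)) 4
        (5 * (t : ℝ) + 3 +
          (3 + Upsilon i C₁ C₂ i'' b c + indC ((i'', b, c) = (i, bstar, cstar))) / 4)
        (5 * (t : ℝ) + 4)) ∧
    (∀ k : Fin 5, k ≠ 3 →
      Passive (fun s => y s (.A k)) (5 * (t : ℝ) + 3) (5 * (t : ℝ) + 4)) ∧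
    (∀ j : Fin m, Passive (fun s => y s (.B j)) (5 * (t : ℝ) + 3) (5 * (t : ℝ) + 4)) ∧
    (∀ k : Fin 2, Passive (fun s => y s (.C k)) (5 * (t : ℝ) + 3) (5 * (t : ℝ) + 4)) ∧
    (∀ k : Fin 2, Passive (fun s => y s (.D k)) (5 * (t : ℝ) + 3) (5 * (t : ℝ) + 4)) ∧
    (∀ (i'' : Fin m) (b c : Bool),
      Passive (fun s => y s (.E i'' b c)) (5 * (t : ℝ) + 3) (5 * (t : ℝ) + 4)) ∧
    (z (5 * (t : ℝ) + 4) (.A 0) = 1 ∧ z (5 * (t : ℝ) + 4) (.A 1) = 1 ∧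
      z (5 * (t : ℝ) + 4) (.A 2) = 1 ∧ z (5 * (t : ℝ) + 4) (.A 3) = 0 ∧
      z (5 * (t : ℝ) + 4) (.A 4) = 0) ∧
    (z (5 * (t : ℝ) + 4) (.B i') = 0) ∧
    (∀ j : Fin m, j ≠ i' → z (5 * (t : ℝ) + 4) (.B j) = 1) ∧
    (z (5 * (t : ℝ) + 4) (.C 0) = (C₁ : ℝ) + (Δ₁ : ℝ)) ∧
    (z (5 * (t : ℝ) + 4) (.C 1) = (C₂ : ℝ) + (Δ₂ : ℝ)) ∧
    (∀ k : Fin 2, z (5 * (t : ℝ) + 4) (.D k) = 0) ∧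
    (∀ (i'' : Fin m) (b c : Bool), z (5 * (t : ℝ) + 4) (.E i'' b c) = 3) ∧
    (∀ (i'' : Fin m) (b c : Bool), z (5 * (t : ℝ) + 4) (.F i'' b c) = 0) := by
  have ht0 : (0:ℝ) ≤ 5 * (t:ℝ) := by positivity
  have hz0 : ∀ p, z (5*(t:ℝ)) p = encCfg i C₁ C₂ p := fun p => by rw [hz]
  have h1 := int0 h i C₁ C₂ ht0 hz0
  have h2 := int1 h i C₁ C₂ hb hc (a := 5*(t:ℝ)+1) (by positivity) h1
  have hz2 : ∀ p, z (5*(t:ℝ)+2) p = Z2 i C₁ C₂ p := by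
    intro p; rw [show 5*(t:ℝ)+2 = 5*(t:ℝ)+1+1 by ring]; exact h2 p
  have h3 := int2 h i C₁ C₂ hb hc (a := 5*(t:ℝ)+2) (by positivity) hz2
  have hz3 : ∀ p, z (5*(t:ℝ)+3) p = Z3 M i C₁ C₂ bstar cstar p := by
    intro p; rw [show 5*(t:ℝ)+3 = 5*(t:ℝ)+2+1 by ring]; exact h3 p
  obtain ⟨pA3, pAk, pB, pC, pD, pE, pF, pZ4⟩ :=
    int3 h i C₁ C₂ hb hc (a := 5*(t:ℝ)+3) (by positivity) hz3
  set a : ℝ := 5*(t:ℝ)+3 with hadef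
  have he4 : 5*(t:ℝ)+4 = a + 1 := by rw [hadef]; ring
  have hz4 : ∀ p, z (5*(t:ℝ)+4) p = Z4 M i C₁ C₂ bstar cstar p := by
    intro p; rw [he4]; exact pZ4 p
  refine ⟨?_, ?_, ?_, ?_, ?_, ?_, ?_, ?_, ?_, ?_, ?_, ?_, ?_, ?_, ?_⟩
  · -- UnitActive A3
    intro s hs
    have hsIcc : s ∈ Icc a (a+1) := ⟨hs.1.le, by rw [← he4]; exact hs.2.le⟩
    have hgoal : y s (.A 3) - y a (.A 3) = 1 * (s - a) := by
      rw [pA3 s hsIcc]; ring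
    exact hgoal
  · -- F coordinates
    intro i'' b c
    have hW1 := ups_W_ge_one (i := i) (i'' := i'') (b := b) (c := c) hb hc
    have hW3 := ups_W_le_three (i := i) (i'' := i'') (b := b) (c := c) hb hc
    constructor
    · intro s hs
      obtain ⟨hs1, hs2⟩ := hs
      have hsIcc : s ∈ Icc a (a+1) := ⟨hs1.le, by linarith⟩
      have hval := pF i'' b c s hsIcc
      rw [max_eq_left (by linarith)] at hval
      have hgoal : y s (.F i'' b c) = y a (.F i'' b c) := by
        rw [mul_zero] at hval; exact sub_eq_zero.1 hval
      exact hgoal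
    · intro s hs
      obtain ⟨hs1, hs2⟩ := hs
      have hsIcc : s ∈ Icc a (a+1) := ⟨by linarith, by rw [← he4]; exact hs2.le⟩
      have hv1 := pF i'' b c s hsIcc
      rw [max_eq_right (by linarith)] at hv1
      have hmemq : a + (3 + Upsilon i C₁ C₂ i'' b c
          + indC ((i'', b, c) = (i, bstar, cstar))) / 4 ∈ Icc a (a+1) :=
        ⟨by linarith, by linarith⟩
      have hv2 := pF i'' b c _ hmemq
      rw [show a + (3 + Upsilon i C₁ C₂ i'' b c
          + indC ((i'', b, c) = (i, bstar, cstar))) / 4 - a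
          - (3 + Upsilon i C₁ C₂ i'' b c
          + indC ((i'', b, c) = (i, bstar, cstar))) / 4 = 0 by ring] at hv2
      rw [max_self, mul_zero] at hv2
      have hgoal : y s (.F i'' b c) - y (a + (3 + Upsilon i C₁ C₂ i'' b c
          + indC ((i'', b, c) = (i, bstar, cstar))) / 4) (.F i'' b c)
          = 4 * (s - (a + (3 + Upsilon i C₁ C₂ i'' b c
          + indC ((i'', b, c) = (i, bstar, cstar))) / 4)) := by
        linear_combination hv1 - hv2
      exact hgoal
  · -- A passive, k ≠ 3
    intro k hk s hs
    have hsIcc : s ∈ Icc a (a+1) := ⟨hs.1.le, by rw [← he4]; exact hs.2.le⟩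
    exact sub_eq_zero.1 (pAk k hk s hsIcc)
  · intro j s hs
    have hsIcc : s ∈ Icc a (a+1) := ⟨hs.1.le, by rw [← he4]; exact hs.2.le⟩
    exact sub_eq_zero.1 (pB j s hsIcc)
  · intro k s hs
    have hsIcc : s ∈ Icc a (a+1) := ⟨hs.1.le, by rw [← he4]; exact hs.2.le⟩
    exact sub_eq_zero.1 (pC k s hsIcc)
  · intro k s hs
    have hsIcc : s ∈ Icc a (a+1) := ⟨hs.1.le, by rw [← he4]; exact hs.2.le⟩
    exact sub_eq_zero.1 (pD k s hsIcc)
  · intro i'' b c s hs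
    have hsIcc : s ∈ Icc a (a+1) := ⟨hs.1.le, by rw [← he4]; exact hs.2.le⟩
    exact sub_eq_zero.1 (pE i'' b c s hsIcc)
  · refine ⟨?_, ?_, ?_, ?_, ?_⟩ <;> rw [hz4] <;> simp [Z4]
  · rw [hz4]; simp [Z4, hΓ]
  · intro j hj
    rw [hz4 (.B j)]
    have : (M.Γ i bstar cstar).1 ≠ j := by rw [hΓ]; exact fun hh => hj hh.symm
    simp [Z4, this]
  · rw [hz4]; simp [Z4, hΓ]
  · rw [hz4]; simp [Z4, hΓ]
  · intro k; rw [hz4]; simp [Z4]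
  · intro i'' b c; rw [hz4]; simp [Z4]
  · intro i'' b c; rw [hz4]; simp [Z4]
end
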